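/- arXiv:2108.11613 — 4 statements merged into one kernel-verified Lean document; each statement's English description precedes it below -/
import Mathlib

section
/- There exist a constant c > 0 and an integer N such that for every n ≥ N, when the n edges e_1, …, e_n of a round on n agents are chosen independently and uniformly at random among all C(n,2) unordered pairs of distinct elements of {1, …, n}, the expected value of M(e), the maximum length of a monotone interference path in the round (equivalently, one plus the maximum length of a directed path in the dependency DAG of the round), is at least c · (log n)/(log log n). -/
open Finset

/-- An edge of the complete graph `K_n`: an unordered pair of two distinct
elements of `{1, …, n}`, modeled as a 2-element subset of `Fin n`. -/
abbrev Edge (n : ℕ) := {s : Finset (Fin n) // s.card = 2}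

/-- A round on `n` agents: a sequence of `n` interactions (edges). -/
abbrev Round (n : ℕ) := Fin n → Edge n

/-- `IsMonoPath e t` says that the strictly increasing sequence of indices
`t 0 < t 1 < … < t (k-1)` (interaction labels) forms a monotone interference
path of length `k` in the round `e`: consecutive interactions share an agent. -/
def IsMonoPath {n k : ℕ} (e : Round n) (t : Fin k → Fin n) : Prop :=
  StrictMono t ∧
    ∀ i j : Fin k, (i : ℕ) + 1 = (j : ℕ) →
      ((e (t i)).1 ∩ (e (t j)).1).Nonempty

/-- `M e` is the maximum length of a monotone interference path in the round `e`. -/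
noncomputable def M {n : ℕ} (e : Round n) : ℕ :=
  sSup {k | ∃ t : Fin k → Fin n, IsMonoPath e t}

lemma card_edge (n : ℕ) : Fintype.card (Edge n) = n.choose 2 := by
  classical
  simpa using Fintype.card_finset_len (α := Fin n) 2

lemma witness_le_M {n k : ℕ} (e : Round n) (v : Fin n) (S : Finset (Fin n))
    (hS : S.card = k) (hv : ∀ t ∈ S, v ∈ (e t).1) : k ≤ M e := by
  have hmem : k ∈ {m | ∃ t : Fin m → Fin n, IsMonoPath e t} := by
    refine ⟨S.orderEmbOfFin hS, (S.orderEmbOfFin hS).strictMono, fun i j _ => ?_⟩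
    exact ⟨v, Finset.mem_inter.2
      ⟨hv _ (S.orderEmbOfFin_mem hS i), hv _ (S.orderEmbOfFin_mem hS j)⟩⟩
  refine le_csSup ⟨n, fun m hm => ?_⟩ hmem
  obtain ⟨t, ht, -⟩ := hm
  simpa using Fintype.card_le_of_injective t ht.injective

lemma sum_round_prod {n : ℕ} (f : Fin n → Edge n → ℝ) :
    ∑ e : Round n, ∏ t, f t (e t) = ∏ t, ∑ x : Edge n, f t x := by
  classical
  have h := Finset.prod_univ_sum (fun _ : Fin n => (Finset.univ : Finset (Edge n))) f
  rw [Fintype.piFinset_univ] at h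
  exact h.symm

lemma prod_two {n : ℕ} (S : Finset (Fin n)) (a b : ℝ) :
    (∏ t : Fin n, if t ∈ S then a else b) = a ^ S.card * b ^ (n - S.card) := by
  classical
  rw [Finset.prod_ite, Finset.prod_const, Finset.prod_const]
  have h1 : Finset.filter (fun t => t ∈ S) (Finset.univ : Finset (Fin n)) = S := by
    ext x; simp
  have h2 : Finset.filter (fun t => ¬ t ∈ S) (Finset.univ : Finset (Fin n)) = Sᶜ := by
    ext x; simp
  rw [h1, h2, Finset.card_compl, Fintype.card_fin]

lemma prod_four {n : ℕ} (S T : Finset (Fin n)) (a b c d : ℝ) :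
    (∏ t : Fin n, if t ∈ S then (if t ∈ T then a else b) else (if t ∈ T then c else d))
      = a ^ (S ∩ T).card * b ^ (S \ T).card * c ^ (T \ S).card
        * d ^ (n - (S ∪ T).card) := by
  classical
  rw [Finset.prod_ite, Finset.prod_ite, Finset.prod_ite]
  simp only [Finset.prod_const]
  have h1 : Finset.filter (fun t => t ∈ T) (Finset.filter (fun t => t ∈ S) (Finset.univ : Finset (Fin n))) = S ∩ T := by
    ext x; simp [and_comm]
  have h2 : Finset.filter (fun t => ¬ t ∈ T) (Finset.filter (fun t => t ∈ S) (Finset.univ : Finset (Fin n))) = S \ T := by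
    ext x; simp [Finset.mem_sdiff]
  have h3 : Finset.filter (fun t => t ∈ T) (Finset.filter (fun t => ¬ t ∈ S) (Finset.univ : Finset (Fin n))) = T \ S := by
    ext x; simp [Finset.mem_sdiff, and_comm]
  have h4 : Finset.filter (fun t => ¬ t ∈ T) (Finset.filter (fun t => ¬ t ∈ S) (Finset.univ : Finset (Fin n))) = (S ∪ T)ᶜ := by
    ext x; simp [Finset.mem_union]
  rw [h1, h2, h3, h4, Finset.card_compl, Fintype.card_fin]
  ring

noncomputable def ind {n : ℕ} (v : Fin n) (x : Edge n) : ℝ := if v ∈ x.1 then 1 else 0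

lemma ind_nonneg {n : ℕ} (v : Fin n) (x : Edge n) : 0 ≤ ind v x := by
  unfold ind; split_ifs <;> norm_num

lemma mem_of_ind_ne_zero {n : ℕ} {v : Fin n} {x : Edge n} (h : ind v x ≠ 0) : v ∈ x.1 := by
  by_contra hc; exact h (by simp [ind, hc])

lemma ind_mul_self {n : ℕ} (v : Fin n) (x : Edge n) : ind v x * ind v x = ind v x := by
  unfold ind; split_ifs <;> norm_num

lemma sum_ind {n : ℕ} (v : Fin n) : ∑ x : Edge n, ind v x = ((n - 1 : ℕ) : ℝ) := by
  classical
  unfold ind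
  rw [Finset.sum_boole]
  norm_cast
  have hins : ∀ s ∈ Finset.powersetCard 1 ((Finset.univ : Finset (Fin n)).erase v),
      (insert v s).card = 2 := by
    intro s hs
    rw [Finset.mem_powersetCard] at hs
    have hvs : v ∉ s := fun hv => (Finset.ne_of_mem_erase (hs.1 hv)) rfl
    rw [Finset.card_insert_of_notMem hvs, hs.2]
  have hb : (Finset.univ.filter (fun x : Edge n => v ∈ x.1)).card
      = (Finset.powersetCard 1 ((Finset.univ : Finset (Fin n)).erase v)).card := by
    refine Finset.card_bij' (fun x _ => x.1.erase v)
      (fun s hs => ⟨insert v s, hins s hs⟩) ?_ ?_ ?_ ?_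
    · intro x hx
      have hv : v ∈ x.1 := (Finset.mem_filter.1 hx).2
      rw [Finset.mem_powersetCard]
      exact ⟨Finset.erase_subset_erase v (Finset.subset_univ _),
        by rw [Finset.card_erase_of_mem hv, x.2]⟩
    · intro s hs
      exact Finset.mem_filter.2 ⟨Finset.mem_univ _, Finset.mem_insert_self v s⟩
    · intro x hx
      have hv : v ∈ x.1 := (Finset.mem_filter.1 hx).2
      exact Subtype.ext (Finset.insert_erase hv)
    · intro s hs
      rw [Finset.mem_powersetCard] at hs
      have hvs : v ∉ s := fun hv => (Finset.ne_of_mem_erase (hs.1 hv)) rfl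
      exact Finset.erase_insert hvs
  rw [hb, Finset.card_powersetCard, Finset.card_erase_of_mem (Finset.mem_univ v),
    Finset.card_univ, Fintype.card_fin, Nat.choose_one_right]

lemma sum_ind_pair {n : ℕ} {v w : Fin n} (hvw : v ≠ w) :
    ∑ x : Edge n, ind v x * ind w x = 1 := by
  classical
  have hrw : ∀ x : Edge n, ind v x * ind w x
      = if (v ∈ x.1 ∧ w ∈ x.1) then (1:ℝ) else 0 := by
    intro x; unfold ind; by_cases h1 : v ∈ x.1 <;> by_cases h2 : w ∈ x.1 <;> simp [h1, h2]
  rw [Finset.sum_congr rfl (fun x _ => hrw x), Finset.sum_boole]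
  norm_cast
  rw [Finset.card_eq_one]
  refine ⟨⟨{v, w}, Finset.card_pair hvw⟩, ?_⟩
  ext x
  simp only [Finset.mem_filter, Finset.mem_univ, true_and, Finset.mem_singleton]
  constructor
  · rintro ⟨h1, h2⟩
    have hsub : ({v, w} : Finset (Fin n)) ⊆ x.1 := by
      intro z hz
      rcases Finset.mem_insert.1 hz with rfl | hz
      · exact h1
      · rw [Finset.mem_singleton] at hz; subst hz; exact h2
    have hx : ({v, w} : Finset (Fin n)) = x.1 :=
      Finset.eq_of_subset_of_card_le hsub (by rw [x.2, Finset.card_pair hvw])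
    exact Subtype.ext hx.symm
  · rintro rfl
    constructor
    · exact Finset.mem_insert_self v {w}
    · exact Finset.mem_insert_of_mem (Finset.mem_singleton_self w)

noncomputable def PP {n : ℕ} (v : Fin n) (S : Finset (Fin n)) (e : Round n) : ℝ :=
  ∏ t ∈ S, ind v (e t)

lemma PP_nonneg {n : ℕ} (v : Fin n) (S : Finset (Fin n)) (e : Round n) : 0 ≤ PP v S e :=
  Finset.prod_nonneg fun t _ => ind_nonneg v (e t)

lemma sum_PP {n : ℕ} (v : Fin n) (S : Finset (Fin n)) :
    ∑ e : Round n, PP v S e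
      = ((n - 1 : ℕ) : ℝ) ^ S.card * ((n.choose 2 : ℕ) : ℝ) ^ (n - S.card) := by
  classical
  have h1 : ∀ e : Round n, PP v S e = ∏ t : Fin n, (if t ∈ S then ind v (e t) else 1) := by
    intro e
    rw [Finset.prod_ite_mem, Finset.univ_inter]
    rfl
  calc ∑ e : Round n, PP v S e
      = ∑ e : Round n, ∏ t : Fin n, (if t ∈ S then ind v (e t) else 1) :=
        Finset.sum_congr rfl fun e _ => h1 e
    _ = ∏ t : Fin n, ∑ x : Edge n, (if t ∈ S then ind v x else 1) :=
        sum_round_prod (fun t x => if t ∈ S then ind v x else 1)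
    _ = ∏ t : Fin n, (if t ∈ S then ((n - 1 : ℕ) : ℝ) else ((n.choose 2 : ℕ) : ℝ)) := by
        refine Finset.prod_congr rfl fun t _ => ?_
        split_ifs with h
        · exact sum_ind v
        · rw [Finset.sum_const, Finset.card_univ, card_edge, nsmul_eq_mul, mul_one]
    _ = _ := prod_two S _ _

lemma sum_PP_mul {n : ℕ} (v w : Fin n) (S T : Finset (Fin n)) :
    ∑ e : Round n, PP v S e * PP w T e
      = (if v = w then ((n - 1 : ℕ) : ℝ) else 1) ^ (S ∩ T).card
        * ((n - 1 : ℕ) : ℝ) ^ (S \ T).card * ((n - 1 : ℕ) : ℝ) ^ (T \ S).card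
        * ((n.choose 2 : ℕ) : ℝ) ^ (n - (S ∪ T).card) := by
  classical
  have h1 : ∀ e : Round n, PP v S e * PP w T e
      = ∏ t : Fin n,
          ((if t ∈ S then ind v (e t) else 1) * (if t ∈ T then ind w (e t) else 1)) := by
    intro e
    rw [Finset.prod_mul_distrib, Finset.prod_ite_mem, Finset.univ_inter,
      Finset.prod_ite_mem, Finset.univ_inter]
    rfl
  calc ∑ e : Round n, PP v S e * PP w T e
      = ∑ e : Round n, ∏ t : Fin n,
          ((if t ∈ S then ind v (e t) else 1) * (if t ∈ T then ind w (e t) else 1)) :=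
        Finset.sum_congr rfl fun e _ => h1 e
    _ = ∏ t : Fin n, ∑ x : Edge n,
          ((if t ∈ S then ind v x else 1) * (if t ∈ T then ind w x else 1)) :=
        sum_round_prod (fun t x => (if t ∈ S then ind v x else 1) * (if t ∈ T then ind w x else 1))
    _ = ∏ t : Fin n, (if t ∈ S then
            (if t ∈ T then (if v = w then ((n - 1 : ℕ) : ℝ) else 1) else ((n - 1 : ℕ) : ℝ))
          else (if t ∈ T then ((n - 1 : ℕ) : ℝ) else ((n.choose 2 : ℕ) : ℝ))) := by
        refine Finset.prod_congr rfl fun t _ => ?_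
        by_cases hS : t ∈ S <;> by_cases hT : t ∈ T <;> simp only [hS, hT, if_true, if_false]
        · by_cases hvw : v = w
          · subst hvw
            rw [if_pos rfl, Finset.sum_congr rfl (fun x _ => ind_mul_self v x)]
            exact sum_ind v
          · rw [if_neg hvw]
            exact sum_ind_pair hvw
        · simp only [mul_one]; exact sum_ind v
        · simp only [one_mul]; exact sum_ind w
        · simp only [one_mul]
          rw [Finset.sum_const, Finset.card_univ, card_edge, nsmul_eq_mul, mul_one]
    _ = _ := prod_four S T _ _ _ _

lemma sum_W_le {n k : ℕ} (h2k : 2 * k ≤ n) (S : Finset (Fin n)) (hS : S.card = k) :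
    ∑ T ∈ Finset.powersetCard k (Finset.univ : Finset (Fin n)),
        ((n - 1 : ℕ) : ℝ) ^ (2 * k - (S ∩ T).card)
          * ((n.choose 2 : ℕ) : ℝ) ^ ((n - 2 * k) + (S ∩ T).card)
      ≤ 3 ^ k * ((n - 1 : ℕ) : ℝ) ^ k * ((n.choose 2 : ℕ) : ℝ) ^ (n - k) := by
  classical
  set Dr : ℝ := ((n - 1 : ℕ) : ℝ) with hDrdef
  set Qr : ℝ := ((n.choose 2 : ℕ) : ℝ) with hQrdef
  have hDr : 0 ≤ Dr := Nat.cast_nonneg _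
  have hQr : 0 ≤ Qr := Nat.cast_nonneg _
  have h2Q : 2 * n.choose 2 = n * (n - 1) := by
    have he : 2 ∣ n * (n - 1) := by
      rcases Nat.even_or_odd n with h | h
      · exact Dvd.dvd.mul_right h.two_dvd _
      · exact Dvd.dvd.mul_left (Nat.Odd.sub_odd h odd_one).two_dvd _
    rw [Nat.choose_two_right, Nat.mul_div_cancel' he]
  have hnD : (n : ℝ) * Dr = 2 * Qr := by
    rw [hDrdef, hQrdef]
    have hc : ((n * (n - 1) : ℕ) : ℝ) = ((2 * n.choose 2 : ℕ) : ℝ) := by rw [h2Q]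
    push_cast at hc
    linarith
  have hre : ∑ T ∈ Finset.powersetCard k (Finset.univ : Finset (Fin n)),
        Dr ^ (2 * k - (S ∩ T).card) * Qr ^ ((n - 2 * k) + (S ∩ T).card)
      = ∑ p ∈ (S.powerset ×ˢ ((Finset.univ \ S).powerset)).filter
            (fun p => p.1.card + p.2.card = k),
          Dr ^ (2 * k - p.1.card) * Qr ^ ((n - 2 * k) + p.1.card) := by
    refine Finset.sum_nbij' (fun T => (T ∩ S, T \ S)) (fun p => p.1 ∪ p.2) ?_ ?_ ?_ ?_ ?_
    · intro T hT
      have hTc : T.card = k := (Finset.mem_powersetCard.1 hT).2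
      rw [Finset.mem_filter, Finset.mem_product]
      refine ⟨⟨Finset.mem_powerset.2 Finset.inter_subset_right, Finset.mem_powerset.2 ?_⟩, ?_⟩
      · exact Finset.sdiff_subset_sdiff (Finset.subset_univ T) le_rfl
      · rw [add_comm]
        rw [← hTc]
        exact Finset.card_sdiff_add_card_inter T S
    · rintro ⟨J, T'⟩ hp
      rw [Finset.mem_filter, Finset.mem_product] at hp
      obtain ⟨⟨hJ, hT'⟩, hcard⟩ := hp
      rw [Finset.mem_powerset] at hJ hT'
      have hdisj : Disjoint J T' := by
        rw [Finset.disjoint_left]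
        intro a haJ haT'
        exact (Finset.mem_sdiff.1 (hT' haT')).2 (hJ haJ)
      rw [Finset.mem_powersetCard]
      exact ⟨Finset.subset_univ _, by rw [Finset.card_union_of_disjoint hdisj, hcard]⟩
    · intro T _
      ext a
      simp only [Finset.mem_union, Finset.mem_inter, Finset.mem_sdiff]
      tauto
    · rintro ⟨J, T'⟩ hp
      rw [Finset.mem_filter, Finset.mem_product] at hp
      obtain ⟨⟨hJ, hT'⟩, _⟩ := hp
      rw [Finset.mem_powerset] at hJ hT'
      have hT'S : ∀ a ∈ T', a ∉ S := fun a ha => (Finset.mem_sdiff.1 (hT' ha)).2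
      have h1 : (J ∪ T') ∩ S = J := by
        ext a
        simp only [Finset.mem_inter, Finset.mem_union]
        constructor
        · rintro ⟨h | h, hs⟩
          · exact h
          · exact absurd hs (hT'S a h)
        · intro h; exact ⟨Or.inl h, hJ h⟩
      have h2 : (J ∪ T') \ S = T' := by
        ext a
        simp only [Finset.mem_sdiff, Finset.mem_union]
        constructor
        · rintro ⟨h | h, hs⟩
          · exact absurd (hJ h) hs
          · exact h
        · intro h; exact ⟨Or.inr h, hT'S a h⟩
      exact Prod.ext h1 h2
    · intro T _
      rw [Finset.inter_comm]
  rw [hre, Finset.sum_filter, Finset.sum_product]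
  have hinner : ∀ J ∈ S.powerset,
      (∑ T' ∈ ((Finset.univ : Finset (Fin n)) \ S).powerset,
        if J.card + T'.card = k then Dr ^ (2 * k - J.card) * Qr ^ ((n - 2 * k) + J.card) else 0)
      ≤ 2 ^ (k - J.card) * (Dr ^ k * Qr ^ (n - k)) := by
    intro J hJ
    have hJS : J ⊆ S := Finset.mem_powerset.1 hJ
    have hJk : J.card ≤ k := hS ▸ Finset.card_le_card hJS
    have hflt : ((Finset.univ : Finset (Fin n)) \ S).powerset.filter
          (fun T' => J.card + T'.card = k)
        = Finset.powersetCard (k - J.card) ((Finset.univ : Finset (Fin n)) \ S) := by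
      rw [Finset.powersetCard_eq_filter]
      ext T'
      simp only [Finset.mem_filter, Finset.mem_powerset, and_congr_right_iff]
      intro _
      omega
    rw [← Finset.sum_filter, hflt, Finset.sum_const, Finset.card_powersetCard,
      Finset.card_sdiff_of_subset (Finset.subset_univ S), Finset.card_univ, Fintype.card_fin, hS,
      nsmul_eq_mul]
    have hch : (((n - k).choose (k - J.card) : ℕ) : ℝ) ≤ (n : ℝ) ^ (k - J.card) := by
      calc (((n - k).choose (k - J.card) : ℕ) : ℝ) ≤ (((n - k) ^ (k - J.card) : ℕ) : ℝ) := by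
            exact_mod_cast Nat.choose_le_pow (n - k) (k - J.card)
        _ ≤ (n : ℝ) ^ (k - J.card) := by
            push_cast
            exact pow_le_pow_left₀ (by positivity) (by exact_mod_cast Nat.sub_le n k) _
    have hval : (n : ℝ) ^ (k - J.card) * (Dr ^ (2 * k - J.card) * Qr ^ ((n - 2 * k) + J.card))
        = 2 ^ (k - J.card) * (Dr ^ k * Qr ^ (n - k)) := by
      have e1 : 2 * k - J.card = (k - J.card) + k := by omega
      have e2 : n - k = ((n - 2 * k) + J.card) + (k - J.card) := by omega
      have h3 : (n : ℝ) ^ (k - J.card) * Dr ^ (k - J.card)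
          = 2 ^ (k - J.card) * Qr ^ (k - J.card) := by
        rw [← mul_pow, ← mul_pow, hnD]
      rw [e1, e2, pow_add Dr, pow_add Qr]
      linear_combination (Dr ^ k * Qr ^ ((n - 2 * k) + J.card)) * h3
    calc (((n - k).choose (k - J.card) : ℕ) : ℝ)
          * (Dr ^ (2 * k - J.card) * Qr ^ ((n - 2 * k) + J.card))
        ≤ (n : ℝ) ^ (k - J.card) * (Dr ^ (2 * k - J.card) * Qr ^ ((n - 2 * k) + J.card)) := by
          exact mul_le_mul_of_nonneg_right hch (by positivity)
      _ = 2 ^ (k - J.card) * (Dr ^ k * Qr ^ (n - k)) := hval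
  calc (∑ J ∈ S.powerset, ∑ T' ∈ ((Finset.univ : Finset (Fin n)) \ S).powerset,
        if J.card + T'.card = k then Dr ^ (2 * k - J.card) * Qr ^ ((n - 2 * k) + J.card) else 0)
      ≤ ∑ J ∈ S.powerset, 2 ^ (k - J.card) * (Dr ^ k * Qr ^ (n - k)) :=
        Finset.sum_le_sum hinner
    _ = (∑ J ∈ S.powerset, (2 : ℝ) ^ (k - J.card)) * (Dr ^ k * Qr ^ (n - k)) := by
        rw [Finset.sum_mul]
    _ = 3 ^ k * Dr ^ k * Qr ^ (n - k) := by
        have hsp : (∑ J ∈ S.powerset, (2 : ℝ) ^ (k - J.card)) = 3 ^ k := by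
          rw [Finset.sum_powerset]
          have : ∀ j ∈ Finset.range (S.card + 1),
              (∑ J ∈ Finset.powersetCard j S, (2 : ℝ) ^ (k - J.card))
              = (k.choose j : ℝ) * 2 ^ (k - j) := by
            intro j hj
            rw [Finset.sum_congr rfl (fun J hJ => by
              rw [(Finset.mem_powersetCard.1 hJ).2]), Finset.sum_const,
              Finset.card_powersetCard, hS, nsmul_eq_mul]
          rw [Finset.sum_congr rfl this, hS]
          have hap := add_pow (1 : ℝ) 2 k
          norm_num at hap
          rw [hap]
          exact Finset.sum_congr rfl fun x _ => mul_comm _ _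
        rw [hsp]; ring

noncomputable def Yf (n k : ℕ) (e : Round n) : ℝ :=
  ∑ v : Fin n, ∑ S ∈ Finset.powersetCard k (Finset.univ : Finset (Fin n)), PP v S e

lemma main_bound {n k : ℕ} (hn2 : 2 ≤ n) (hk1 : 1 ≤ k) (h2k : 2 * k ≤ n)
    (h3k : (3 * k) ^ k ≤ n) :
    (k : ℝ) / 2 ≤ (∑ e : Round n, (M e : ℝ)) / (Fintype.card (Round n)) := by
  classical
  have hQpos : 0 < n.choose 2 := Nat.choose_pos hn2
  have hQrpos : (0:ℝ) < ((n.choose 2 : ℕ) : ℝ) := by exact_mod_cast hQpos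
  have hDrpos : (0:ℝ) < ((n - 1 : ℕ) : ℝ) := by
    have h : 0 < n - 1 := by omega
    exact_mod_cast h
  have h2Q : 2 * n.choose 2 = n * (n - 1) := by
    have he : 2 ∣ n * (n - 1) := by
      rcases Nat.even_or_odd n with h | h
      · exact Dvd.dvd.mul_right h.two_dvd _
      · exact Dvd.dvd.mul_left (Nat.Odd.sub_odd h odd_one).two_dvd _
    rw [Nat.choose_two_right, Nat.mul_div_cancel' he]
  have hQleD2 : n.choose 2 ≤ (n - 1) * (n - 1) := by
    have h2 : 2 * n.choose 2 ≤ 2 * ((n - 1) * (n - 1)) := by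
      rw [h2Q]
      calc n * (n - 1) ≤ (2 * (n - 1)) * (n - 1) := Nat.mul_le_mul_right _ (by omega)
        _ = 2 * ((n - 1) * (n - 1)) := by ring
    exact Nat.le_of_mul_le_mul_left h2 (by norm_num)
  have hQD2r : ((n.choose 2 : ℕ) : ℝ) ≤ ((n - 1 : ℕ) : ℝ) ^ 2 := by
    rw [sq]
    exact_mod_cast hQleD2
  -- the star condition, in ℕ then ℝ
  have hstar : 3 ^ k * n.choose 2 ^ k ≤ n * n.choose k * (n - 1) ^ k := by
    have hdesc : (n - k) ^ k ≤ n.choose k * k ^ k := by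
      calc (n - k) ^ k ≤ (n + 1 - k) ^ k := Nat.pow_le_pow_left (by omega) k
        _ ≤ n.descFactorial k := Nat.pow_sub_le_descFactorial n k
        _ = k.factorial * n.choose k := Nat.descFactorial_eq_factorial_mul_choose n k
        _ ≤ k ^ k * n.choose k := Nat.mul_le_mul_right _ (Nat.factorial_le_pow k)
        _ = n.choose k * k ^ k := Nat.mul_comm _ _
    have hnk : n ^ k ≤ 2 ^ k * (n - k) ^ k := by
      calc n ^ k ≤ (2 * (n - k)) ^ k := Nat.pow_le_pow_left (by omega) k
        _ = 2 ^ k * (n - k) ^ k := Nat.mul_pow 2 (n - k) k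
    have key : (3 ^ k * n.choose 2 ^ k) * (2 ^ k * k ^ k)
        ≤ (n * n.choose k * (n - 1) ^ k) * (2 ^ k * k ^ k) := by
      calc (3 ^ k * n.choose 2 ^ k) * (2 ^ k * k ^ k)
          = (3 * k) ^ k * ((2 * n.choose 2) ^ k) := by
            rw [Nat.mul_pow, Nat.mul_pow]; ring
        _ = (3 * k) ^ k * (n ^ k * (n - 1) ^ k) := by rw [h2Q, Nat.mul_pow n (n - 1) k]
        _ ≤ n * (n ^ k * (n - 1) ^ k) := Nat.mul_le_mul_right _ h3k
        _ ≤ n * ((2 ^ k * (n - k) ^ k) * (n - 1) ^ k) :=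
            Nat.mul_le_mul_left _ (Nat.mul_le_mul_right _ hnk)
        _ ≤ n * ((2 ^ k * (n.choose k * k ^ k)) * (n - 1) ^ k) :=
            Nat.mul_le_mul_left _ (Nat.mul_le_mul_right _ (Nat.mul_le_mul_left _ hdesc))
        _ = (n * n.choose k * (n - 1) ^ k) * (2 ^ k * k ^ k) := by ring
    exact Nat.le_of_mul_le_mul_right key (by positivity)
  have hstarR : (3:ℝ) ^ k * ((n.choose 2 : ℕ) : ℝ) ^ k
      ≤ (n:ℝ) * (n.choose k : ℝ) * ((n - 1 : ℕ) : ℝ) ^ k := by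
    exact_mod_cast hstar
  -- expectation of Y
  have hsumY : ∑ e : Round n, Yf n k e
      = (n : ℝ) * (n.choose k : ℝ)
        * (((n - 1 : ℕ) : ℝ) ^ k * ((n.choose 2 : ℕ) : ℝ) ^ (n - k)) := by
    unfold Yf
    rw [Finset.sum_comm]
    have h1 : ∀ v : Fin n,
        (∑ e : Round n, ∑ S ∈ Finset.powersetCard k (Finset.univ : Finset (Fin n)), PP v S e)
        = (n.choose k : ℝ) * (((n - 1 : ℕ) : ℝ) ^ k * ((n.choose 2 : ℕ) : ℝ) ^ (n - k)) := by
      intro v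
      rw [Finset.sum_comm]
      have h2 : ∀ S ∈ Finset.powersetCard k (Finset.univ : Finset (Fin n)),
          (∑ e : Round n, PP v S e)
          = ((n - 1 : ℕ) : ℝ) ^ k * ((n.choose 2 : ℕ) : ℝ) ^ (n - k) := by
        intro S hS
        rw [sum_PP, (Finset.mem_powersetCard.1 hS).2]
      rw [Finset.sum_congr rfl h2, Finset.sum_const, Finset.card_powersetCard,
        Finset.card_univ, Fintype.card_fin, nsmul_eq_mul]
    rw [Finset.sum_congr rfl (fun v _ => h1 v), Finset.sum_const, Finset.card_univ,
      Fintype.card_fin, nsmul_eq_mul, mul_assoc]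
  -- off-diagonal bound
  have hoffd : ∀ v w : Fin n, v ≠ w →
      ∀ S ∈ Finset.powersetCard k (Finset.univ : Finset (Fin n)),
      ∀ T ∈ Finset.powersetCard k (Finset.univ : Finset (Fin n)),
      (∑ e : Round n, PP v S e * PP w T e)
        ≤ ((n - 1 : ℕ) : ℝ) ^ (2 * k) * ((n.choose 2 : ℕ) : ℝ) ^ (n - 2 * k) := by
    intro v w hvw S hS T hT
    have hSc := (Finset.mem_powersetCard.1 hS).2
    have hTc := (Finset.mem_powersetCard.1 hT).2
    have hjS : (S \ T).card + (S ∩ T).card = k := by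
      rw [← hSc]; exact Finset.card_sdiff_add_card_inter S T
    have hjT : (T \ S).card + (S ∩ T).card = k := by
      have := Finset.card_sdiff_add_card_inter T S
      rw [Finset.inter_comm] at this
      rw [← hTc]; exact this
    have hju : (S ∪ T).card + (S ∩ T).card = 2 * k := by
      have := Finset.card_union_add_card_inter S T
      omega
    have hjn : (S ∪ T).card ≤ n := by
      calc (S ∪ T).card ≤ (Finset.univ : Finset (Fin n)).card := Finset.card_le_card (Finset.subset_univ _)
        _ = n := by rw [Finset.card_univ, Fintype.card_fin]
    rw [sum_PP_mul, if_neg hvw, one_pow, one_mul]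
    have h3 : ((n.choose 2 : ℕ) : ℝ) ^ (S ∩ T).card
        ≤ (((n - 1 : ℕ) : ℝ) ^ 2) ^ (S ∩ T).card :=
      pow_le_pow_left₀ (Nat.cast_nonneg _) hQD2r _
    calc ((n - 1 : ℕ) : ℝ) ^ (S \ T).card * ((n - 1 : ℕ) : ℝ) ^ (T \ S).card
          * ((n.choose 2 : ℕ) : ℝ) ^ (n - (S ∪ T).card)
        = (((n - 1 : ℕ) : ℝ) ^ (S \ T).card * ((n - 1 : ℕ) : ℝ) ^ (T \ S).card
            * ((n.choose 2 : ℕ) : ℝ) ^ (n - 2 * k)) * ((n.choose 2 : ℕ) : ℝ) ^ (S ∩ T).card := by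
          rw [show n - (S ∪ T).card = (n - 2 * k) + (S ∩ T).card from by omega, pow_add]
          ring
      _ ≤ (((n - 1 : ℕ) : ℝ) ^ (S \ T).card * ((n - 1 : ℕ) : ℝ) ^ (T \ S).card
            * ((n.choose 2 : ℕ) : ℝ) ^ (n - 2 * k)) * (((n - 1 : ℕ) : ℝ) ^ 2) ^ (S ∩ T).card := by
          exact mul_le_mul_of_nonneg_left h3 (by positivity)
      _ = ((n - 1 : ℕ) : ℝ) ^ (2 * k)
            * ((n.choose 2 : ℕ) : ℝ) ^ (n - 2 * k) := by
          have hD : ((n - 1 : ℕ) : ℝ) ^ (2 * k)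
              = ((n - 1 : ℕ) : ℝ) ^ (S \ T).card * ((n - 1 : ℕ) : ℝ) ^ (T \ S).card
                * (((n - 1 : ℕ) : ℝ) ^ 2) ^ (S ∩ T).card := by
            rw [← pow_mul, ← pow_add, ← pow_add]
            congr 1
            omega
          rw [hD]
          ring
  -- diagonal bound
  have hdiag : ∀ v : Fin n, ∀ S ∈ Finset.powersetCard k (Finset.univ : Finset (Fin n)),
      (∑ T ∈ Finset.powersetCard k (Finset.univ : Finset (Fin n)),
        ∑ e : Round n, PP v S e * PP v T e)
      ≤ 3 ^ k * ((n - 1 : ℕ) : ℝ) ^ k * ((n.choose 2 : ℕ) : ℝ) ^ (n - k) := by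
    intro v S hS
    have hSc := (Finset.mem_powersetCard.1 hS).2
    have hterm : ∀ T ∈ Finset.powersetCard k (Finset.univ : Finset (Fin n)),
        (∑ e : Round n, PP v S e * PP v T e)
        = ((n - 1 : ℕ) : ℝ) ^ (2 * k - (S ∩ T).card)
          * ((n.choose 2 : ℕ) : ℝ) ^ ((n - 2 * k) + (S ∩ T).card) := by
      intro T hT
      have hTc := (Finset.mem_powersetCard.1 hT).2
      have hjS : (S \ T).card + (S ∩ T).card = k := by
        rw [← hSc]; exact Finset.card_sdiff_add_card_inter S T
      have hjT : (T \ S).card + (S ∩ T).card = k := by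
        have := Finset.card_sdiff_add_card_inter T S
        rw [Finset.inter_comm] at this
        rw [← hTc]; exact this
      have hju : (S ∪ T).card + (S ∩ T).card = 2 * k := by
        have := Finset.card_union_add_card_inter S T
        omega
      rw [sum_PP_mul, if_pos rfl, ← pow_add, ← pow_add]
      congr 2
      · omega
      · omega
    rw [Finset.sum_congr rfl hterm]
    exact sum_W_le h2k S hSc
  -- second moment bound
  have hY2eq : ∑ e : Round n, (Yf n k e) ^ 2
      = ∑ v : Fin n, ∑ w : Fin n,
          ∑ S ∈ Finset.powersetCard k (Finset.univ : Finset (Fin n)),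
          ∑ T ∈ Finset.powersetCard k (Finset.univ : Finset (Fin n)),
          ∑ e : Round n, PP v S e * PP w T e := by
    calc ∑ e : Round n, (Yf n k e) ^ 2
        = ∑ e : Round n, ∑ v : Fin n, ∑ w : Fin n,
            (∑ S ∈ Finset.powersetCard k (Finset.univ : Finset (Fin n)), PP v S e)
            * (∑ T ∈ Finset.powersetCard k (Finset.univ : Finset (Fin n)), PP w T e) := by
          refine Finset.sum_congr rfl fun e _ => ?_
          rw [sq]
          unfold Yf
          rw [Finset.sum_mul_sum]
      _ = ∑ e : Round n, ∑ v : Fin n, ∑ w : Fin n,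
            ∑ S ∈ Finset.powersetCard k (Finset.univ : Finset (Fin n)),
            ∑ T ∈ Finset.powersetCard k (Finset.univ : Finset (Fin n)),
            PP v S e * PP w T e := by
          refine Finset.sum_congr rfl fun e _ => Finset.sum_congr rfl fun v _ =>
            Finset.sum_congr rfl fun w _ => ?_
          rw [Finset.sum_mul_sum]
      _ = _ := by
          rw [Finset.sum_comm]
          refine Finset.sum_congr rfl fun v _ => ?_
          rw [Finset.sum_comm]
          refine Finset.sum_congr rfl fun w _ => ?_
          rw [Finset.sum_comm]
          refine Finset.sum_congr rfl fun S _ => ?_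
          rw [Finset.sum_comm]
  have hsumY2 : ∑ e : Round n, (Yf n k e) ^ 2
      ≤ (n:ℝ) * ((n.choose k : ℝ) * (3 ^ k * ((n - 1 : ℕ) : ℝ) ^ k * ((n.choose 2 : ℕ) : ℝ) ^ (n - k)))
        + (n:ℝ) * ((n:ℝ) * ((n.choose k : ℝ) ^ 2
            * (((n - 1 : ℕ) : ℝ) ^ (2 * k) * ((n.choose 2 : ℕ) : ℝ) ^ (n - 2 * k)))) := by
    rw [hY2eq]
    have hvw : ∀ v w : Fin n,
        (∑ S ∈ Finset.powersetCard k (Finset.univ : Finset (Fin n)),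
          ∑ T ∈ Finset.powersetCard k (Finset.univ : Finset (Fin n)),
          ∑ e : Round n, PP v S e * PP w T e)
        ≤ if v = w then (n.choose k : ℝ) * (3 ^ k * ((n - 1 : ℕ) : ℝ) ^ k * ((n.choose 2 : ℕ) : ℝ) ^ (n - k))
          else (n.choose k : ℝ) ^ 2 * (((n - 1 : ℕ) : ℝ) ^ (2 * k) * ((n.choose 2 : ℕ) : ℝ) ^ (n - 2 * k)) := by
      intro v w
      by_cases h : v = w
      · subst h
        rw [if_pos rfl]
        calc (∑ S ∈ Finset.powersetCard k (Finset.univ : Finset (Fin n)),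
              ∑ T ∈ Finset.powersetCard k (Finset.univ : Finset (Fin n)),
              ∑ e : Round n, PP v S e * PP v T e)
            ≤ ∑ S ∈ Finset.powersetCard k (Finset.univ : Finset (Fin n)),
                (3 ^ k * ((n - 1 : ℕ) : ℝ) ^ k * ((n.choose 2 : ℕ) : ℝ) ^ (n - k)) :=
              Finset.sum_le_sum (hdiag v)
          _ = (n.choose k : ℝ) * (3 ^ k * ((n - 1 : ℕ) : ℝ) ^ k * ((n.choose 2 : ℕ) : ℝ) ^ (n - k)) := by
              rw [Finset.sum_const, Finset.card_powersetCard, Finset.card_univ,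
                Fintype.card_fin, nsmul_eq_mul]
      · rw [if_neg h]
        calc (∑ S ∈ Finset.powersetCard k (Finset.univ : Finset (Fin n)),
              ∑ T ∈ Finset.powersetCard k (Finset.univ : Finset (Fin n)),
              ∑ e : Round n, PP v S e * PP w T e)
            ≤ ∑ S ∈ Finset.powersetCard k (Finset.univ : Finset (Fin n)),
                ∑ T ∈ Finset.powersetCard k (Finset.univ : Finset (Fin n)),
                (((n - 1 : ℕ) : ℝ) ^ (2 * k) * ((n.choose 2 : ℕ) : ℝ) ^ (n - 2 * k)) :=
              Finset.sum_le_sum fun S hS => Finset.sum_le_sum fun T hT => hoffd v w h S hS T hT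
          _ = (n.choose k : ℝ) ^ 2 * (((n - 1 : ℕ) : ℝ) ^ (2 * k) * ((n.choose 2 : ℕ) : ℝ) ^ (n - 2 * k)) := by
              rw [Finset.sum_const, Finset.sum_const, Finset.card_powersetCard, Finset.card_univ,
                Fintype.card_fin, smul_smul, nsmul_eq_mul]
              push_cast
              ring
    calc (∑ v : Fin n, ∑ w : Fin n,
          ∑ S ∈ Finset.powersetCard k (Finset.univ : Finset (Fin n)),
          ∑ T ∈ Finset.powersetCard k (Finset.univ : Finset (Fin n)),
          ∑ e : Round n, PP v S e * PP w T e)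
        ≤ ∑ v : Fin n, ∑ w : Fin n,
            (if v = w then (n.choose k : ℝ) * (3 ^ k * ((n - 1 : ℕ) : ℝ) ^ k * ((n.choose 2 : ℕ) : ℝ) ^ (n - k))
             else (n.choose k : ℝ) ^ 2 * (((n - 1 : ℕ) : ℝ) ^ (2 * k) * ((n.choose 2 : ℕ) : ℝ) ^ (n - 2 * k))) :=
          Finset.sum_le_sum fun v _ => Finset.sum_le_sum fun w _ => hvw v w
      _ ≤ ∑ v : Fin n,
            ((n.choose k : ℝ) * (3 ^ k * ((n - 1 : ℕ) : ℝ) ^ k * ((n.choose 2 : ℕ) : ℝ) ^ (n - k))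
              + (n:ℝ) * ((n.choose k : ℝ) ^ 2 * (((n - 1 : ℕ) : ℝ) ^ (2 * k) * ((n.choose 2 : ℕ) : ℝ) ^ (n - 2 * k)))) := by
          refine Finset.sum_le_sum fun v _ => ?_
          rw [← Finset.add_sum_erase _ _ (Finset.mem_univ v), if_pos rfl]
          refine add_le_add_right ?_ _
          calc (∑ w ∈ Finset.univ.erase v,
                (if v = w then (n.choose k : ℝ) * (3 ^ k * ((n - 1 : ℕ) : ℝ) ^ k * ((n.choose 2 : ℕ) : ℝ) ^ (n - k))
                 else (n.choose k : ℝ) ^ 2 * (((n - 1 : ℕ) : ℝ) ^ (2 * k) * ((n.choose 2 : ℕ) : ℝ) ^ (n - 2 * k))))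
              = ∑ w ∈ Finset.univ.erase v,
                  ((n.choose k : ℝ) ^ 2 * (((n - 1 : ℕ) : ℝ) ^ (2 * k) * ((n.choose 2 : ℕ) : ℝ) ^ (n - 2 * k))) :=
                Finset.sum_congr rfl fun w hw =>
                  if_neg (fun hh => (Finset.ne_of_mem_erase hw) hh.symm)
            _ = ((Finset.univ.erase v).card : ℝ)
                  * ((n.choose k : ℝ) ^ 2 * (((n - 1 : ℕ) : ℝ) ^ (2 * k) * ((n.choose 2 : ℕ) : ℝ) ^ (n - 2 * k))) := by
                rw [Finset.sum_const, nsmul_eq_mul]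
            _ ≤ (n:ℝ) * ((n.choose k : ℝ) ^ 2 * (((n - 1 : ℕ) : ℝ) ^ (2 * k) * ((n.choose 2 : ℕ) : ℝ) ^ (n - 2 * k))) := by
                refine mul_le_mul_of_nonneg_right ?_ (by positivity)
                rw [Finset.card_erase_of_mem (Finset.mem_univ v), Finset.card_univ, Fintype.card_fin]
                have : n - 1 ≤ n := Nat.sub_le n 1
                exact_mod_cast this
      _ = _ := by
          rw [Finset.sum_const, Finset.card_univ, Fintype.card_fin, nsmul_eq_mul]
          ring
  -- abbreviate
  set Z : ℝ := (n:ℝ) * ((n:ℝ) * ((n.choose k : ℝ) ^ 2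
      * (((n - 1 : ℕ) : ℝ) ^ (2 * k) * ((n.choose 2 : ℕ) : ℝ) ^ (n - 2 * k)))) with hZ
  have hA1Z : (n:ℝ) * ((n.choose k : ℝ) * (3 ^ k * ((n - 1 : ℕ) : ℝ) ^ k * ((n.choose 2 : ℕ) : ℝ) ^ (n - k)))
      ≤ Z := by
    rw [hZ]
    have he : n - k = (n - 2 * k) + k := by omega
    rw [he, pow_add]
    calc (n:ℝ) * ((n.choose k : ℝ) * (3 ^ k * ((n - 1 : ℕ) : ℝ) ^ k
            * (((n.choose 2 : ℕ) : ℝ) ^ (n - 2 * k) * ((n.choose 2 : ℕ) : ℝ) ^ k)))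
        = (3 ^ k * ((n.choose 2 : ℕ) : ℝ) ^ k) * ((n:ℝ) * (n.choose k : ℝ) * ((n - 1 : ℕ) : ℝ) ^ k)
            * ((n.choose 2 : ℕ) : ℝ) ^ (n - 2 * k) := by ring
      _ ≤ ((n:ℝ) * (n.choose k : ℝ) * ((n - 1 : ℕ) : ℝ) ^ k)
            * ((n:ℝ) * (n.choose k : ℝ) * ((n - 1 : ℕ) : ℝ) ^ k)
            * ((n.choose 2 : ℕ) : ℝ) ^ (n - 2 * k) := by
          refine mul_le_mul_of_nonneg_right (mul_le_mul_of_nonneg_right hstarR ?_) (by positivity)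
          positivity
      _ = (n:ℝ) * ((n:ℝ) * ((n.choose k : ℝ) ^ 2
            * (((n - 1 : ℕ) : ℝ) ^ (2 * k) * ((n.choose 2 : ℕ) : ℝ) ^ (n - 2 * k)))) := by
          rw [two_mul, pow_add]
          ring
  have hY2le : ∑ e : Round n, (Yf n k e) ^ 2 ≤ 2 * Z := by
    calc ∑ e : Round n, (Yf n k e) ^ 2
        ≤ (n:ℝ) * ((n.choose k : ℝ) * (3 ^ k * ((n - 1 : ℕ) : ℝ) ^ k * ((n.choose 2 : ℕ) : ℝ) ^ (n - k))) + Z :=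
          by rw [hZ]; exact hsumY2
      _ ≤ Z + Z := add_le_add_left hA1Z Z
      _ = 2 * Z := by ring
  have hYsq : (∑ e : Round n, Yf n k e) ^ 2 = ((n.choose 2 : ℕ) : ℝ) ^ n * Z := by
    rw [hsumY, hZ]
    have he : (n - k) + (n - k) = n + (n - 2 * k) := by omega
    have hq : ((n.choose 2 : ℕ) : ℝ) ^ (n - k) * ((n.choose 2 : ℕ) : ℝ) ^ (n - k)
        = ((n.choose 2 : ℕ) : ℝ) ^ n * ((n.choose 2 : ℕ) : ℝ) ^ (n - 2 * k) := by
      rw [← pow_add, ← pow_add, he]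
    have hd : ((n - 1 : ℕ) : ℝ) ^ k * ((n - 1 : ℕ) : ℝ) ^ k = ((n - 1 : ℕ) : ℝ) ^ (2 * k) := by
      rw [← pow_add, two_mul]
    calc ((n:ℝ) * (n.choose k : ℝ) * (((n - 1 : ℕ) : ℝ) ^ k * ((n.choose 2 : ℕ) : ℝ) ^ (n - k))) ^ 2
        = ((n:ℝ) * (n:ℝ) * ((n.choose k : ℝ) * (n.choose k : ℝ)))
            * ((((n - 1 : ℕ) : ℝ) ^ k * ((n - 1 : ℕ) : ℝ) ^ k)
              * (((n.choose 2 : ℕ) : ℝ) ^ (n - k) * ((n.choose 2 : ℕ) : ℝ) ^ (n - k))) := by ring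
      _ = ((n:ℝ) * (n:ℝ) * ((n.choose k : ℝ) * (n.choose k : ℝ)))
            * (((n - 1 : ℕ) : ℝ) ^ (2 * k)
              * (((n.choose 2 : ℕ) : ℝ) ^ n * ((n.choose 2 : ℕ) : ℝ) ^ (n - 2 * k))) := by
          rw [hq, hd]
      _ = _ := by ring
  -- the good event
  set G := Finset.univ.filter (fun e : Round n => Yf n k e ≠ 0) with hG
  have hCS : (∑ e : Round n, Yf n k e) ^ 2 ≤ (G.card : ℝ) * ∑ e : Round n, (Yf n k e) ^ 2 := by
    have h1 : ∑ e : Round n, Yf n k e = ∑ e ∈ G, Yf n k e := by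
      rw [hG]
      exact (Finset.sum_filter_ne_zero _).symm
    have h2 := Finset.sum_mul_sq_le_sq_mul_sq G (fun _ => (1:ℝ)) (fun e => Yf n k e)
    simp only [one_pow, one_mul, Finset.sum_const, nsmul_eq_mul, mul_one] at h2
    have h3 : ∑ e ∈ G, (Yf n k e) ^ 2 ≤ ∑ e : Round n, (Yf n k e) ^ 2 :=
      Finset.sum_le_sum_of_subset_of_nonneg (Finset.filter_subset _ _)
        (fun e _ _ => sq_nonneg _)
    calc (∑ e : Round n, Yf n k e) ^ 2 = (∑ e ∈ G, Yf n k e) ^ 2 := by rw [h1]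
      _ ≤ (G.card : ℝ) * ∑ e ∈ G, (Yf n k e) ^ 2 := h2
      _ ≤ (G.card : ℝ) * ∑ e : Round n, (Yf n k e) ^ 2 :=
          mul_le_mul_of_nonneg_left h3 (Nat.cast_nonneg _)
  -- positivity of the second moment
  have hY2pos : 0 < ∑ e : Round n, (Yf n k e) ^ 2 := by
    obtain ⟨S₀, hS₀⟩ := Finset.powersetCard_nonempty.2
      (by rw [Finset.card_univ, Fintype.card_fin]; omega :
        k ≤ (Finset.univ : Finset (Fin n)).card)
    have hn0 : 0 < n := by omega
    have hn1 : 1 < n := by omega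
    set va : Fin n := ⟨0, hn0⟩ with hva
    set vb : Fin n := ⟨1, hn1⟩ with hvb
    have h01 : va ≠ vb := by
      intro h
      have := congrArg Fin.val h
      simp [hva, hvb] at this
    set x₀ : Edge n := ⟨{va, vb}, Finset.card_pair h01⟩ with hx₀
    set e₀ : Round n := fun _ => x₀ with he₀
    have hPP1 : PP va S₀ e₀ = 1 := by
      unfold PP
      refine Finset.prod_eq_one fun t _ => ?_
      show ind va x₀ = 1
      unfold ind
      rw [if_pos]
      exact Finset.mem_insert_self _ _
    have hY1 : 1 ≤ Yf n k e₀ := by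
      unfold Yf
      calc (1:ℝ) = PP va S₀ e₀ := hPP1.symm
        _ ≤ ∑ S ∈ Finset.powersetCard k (Finset.univ : Finset (Fin n)), PP va S e₀ :=
          Finset.single_le_sum (f := fun S => PP va S e₀) (fun S _ => PP_nonneg _ _ _) hS₀
        _ ≤ ∑ v : Fin n, ∑ S ∈ Finset.powersetCard k (Finset.univ : Finset (Fin n)), PP v S e₀ :=
          Finset.single_le_sum
            (f := fun v => ∑ S ∈ Finset.powersetCard k (Finset.univ : Finset (Fin n)), PP v S e₀)
            (fun v _ => Finset.sum_nonneg fun S _ => PP_nonneg _ _ _) (Finset.mem_univ va)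
    calc (0:ℝ) < 1 := one_pos
      _ ≤ (Yf n k e₀) ^ 2 := by nlinarith
      _ ≤ ∑ e : Round n, (Yf n k e) ^ 2 :=
        Finset.single_le_sum (f := fun e => (Yf n k e) ^ 2)
          (fun e _ => sq_nonneg _) (Finset.mem_univ e₀)
  -- Q^n ≤ 2 |G|
  have hQG : ((n.choose 2 : ℕ) : ℝ) ^ n ≤ 2 * (G.card : ℝ) := by
    have hchain : (((n.choose 2 : ℕ) : ℝ) ^ n) * (∑ e : Round n, (Yf n k e) ^ 2)
        ≤ (2 * (G.card : ℝ)) * (∑ e : Round n, (Yf n k e) ^ 2) := by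
      calc (((n.choose 2 : ℕ) : ℝ) ^ n) * (∑ e : Round n, (Yf n k e) ^ 2)
          ≤ (((n.choose 2 : ℕ) : ℝ) ^ n) * (2 * Z) :=
            mul_le_mul_of_nonneg_left hY2le (by positivity)
        _ = 2 * ((∑ e : Round n, Yf n k e) ^ 2) := by rw [hYsq]; ring
        _ ≤ 2 * ((G.card : ℝ) * ∑ e : Round n, (Yf n k e) ^ 2) := by linarith
        _ = (2 * (G.card : ℝ)) * (∑ e : Round n, (Yf n k e) ^ 2) := by ring
    exact le_of_mul_le_mul_right hchain hY2pos
  -- every e in G has M e ≥ k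
  have hMG : ∀ e ∈ G, (k : ℝ) ≤ (M e : ℝ) := by
    intro e he
    have hYne : Yf n k e ≠ 0 := (Finset.mem_filter.1 he).2
    unfold Yf at hYne
    obtain ⟨v, -, hv⟩ := Finset.exists_ne_zero_of_sum_ne_zero hYne
    obtain ⟨S, hS, hSne⟩ := Finset.exists_ne_zero_of_sum_ne_zero hv
    have hall : ∀ t ∈ S, v ∈ (e t).1 := by
      intro t ht
      by_contra hc
      have h0 : ind v (e t) = 0 := by unfold ind; rw [if_neg hc]
      exact hSne (Finset.prod_eq_zero ht h0)
    have hk : k ≤ M e := witness_le_M e v S (Finset.mem_powersetCard.1 hS).2 hall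
    exact_mod_cast hk
  -- conclusion
  have hcard : ((Fintype.card (Round n) : ℕ) : ℝ) = ((n.choose 2 : ℕ) : ℝ) ^ n := by
    have : Fintype.card (Round n) = (n.choose 2) ^ n := by
      rw [Fintype.card_fun, card_edge, Fintype.card_fin]
    rw [this]
    push_cast
    ring
  have hsumM : (k : ℝ) / 2 * (((n.choose 2 : ℕ) : ℝ) ^ n) ≤ ∑ e : Round n, (M e : ℝ) := by
    calc (k : ℝ) / 2 * (((n.choose 2 : ℕ) : ℝ) ^ n)
        ≤ (k : ℝ) / 2 * (2 * (G.card : ℝ)) := by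
          refine mul_le_mul_of_nonneg_left hQG ?_
          positivity
      _ = (G.card : ℝ) * (k:ℝ) := by ring
      _ = ∑ _e ∈ G, (k:ℝ) := by rw [Finset.sum_const, nsmul_eq_mul]
      _ ≤ ∑ e ∈ G, (M e : ℝ) := Finset.sum_le_sum hMG
      _ ≤ ∑ e : Round n, (M e : ℝ) :=
          Finset.sum_le_sum_of_subset_of_nonneg (Finset.filter_subset _ _)
            (fun e _ _ => Nat.cast_nonneg _)
  have hcardpos : (0:ℝ) < ((Fintype.card (Round n) : ℕ) : ℝ) := by
    rw [hcard]; positivity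
  rw [le_div_iff₀ hcardpos]
  calc (k : ℝ) / 2 * ((Fintype.card (Round n) : ℕ) : ℝ)
      = (k : ℝ) / 2 * (((n.choose 2 : ℕ) : ℝ) ^ n) := by rw [hcard]
    _ ≤ ∑ e : Round n, (M e : ℝ) := hsumM


/-- There exist a constant `c > 0` and an integer `N` such that
for every `n ≥ N`, when the `n` edges of a round on `n` agents are chosen
independently and uniformly at random (i.e. uniformly over all rounds), the
expected value of `M e`, the maximum length of a monotone interference path
(one plus the maximum length of a directed path in the dependency DAG), is at
least `c * log n / log (log n)`. -/
theorem stmt3 :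
    ∃ c : ℝ, 0 < c ∧ ∃ N : ℕ, ∀ n : ℕ, N ≤ n →
      c * Real.log n / Real.log (Real.log n) ≤
        (∑ e : Round n, (M e : ℝ)) / (Fintype.card (Round n)) := by
  refine ⟨1/8, by norm_num, ?_⟩
  have hL : Filter.Tendsto (fun n : ℕ => Real.log n) Filter.atTop Filter.atTop :=
    Real.tendsto_log_atTop.comp tendsto_natCast_atTop_atTop
  have hl : Filter.Tendsto (fun n : ℕ => Real.log (Real.log n)) Filter.atTop Filter.atTop :=
    Real.tendsto_log_atTop.comp hL
  have hev : ∀ᶠ n : ℕ in Filter.atTop,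
      1/8 * Real.log n / Real.log (Real.log n) ≤
        (∑ e : Round n, (M e : ℝ)) / (Fintype.card (Round n)) := by
    filter_upwards [hL.eventually_ge_atTop 64, hl.eventually_ge_atTop 2,
      Filter.eventually_ge_atTop 2] with n hL64 hl2 hn2
    set L : ℝ := Real.log n with hLdef
    set l : ℝ := Real.log L with hldef
    have hLpos : (0:ℝ) < L := by linarith
    have hlpos : (0:ℝ) < l := by linarith
    have hnR : (0:ℝ) < n := by exact_mod_cast (by omega : 0 < n)
    have hsqrtpos : 0 < Real.sqrt L := Real.sqrt_pos.2 hLpos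
    have hl_le : l ≤ 2 * Real.sqrt L := by
      have h1 : Real.log (Real.sqrt L) ≤ Real.sqrt L - 1 :=
        Real.log_le_sub_one_of_pos hsqrtpos
      have h2 : Real.log (Real.sqrt L) = l / 2 := by
        rw [Real.log_sqrt hLpos.le]
      rw [h2] at h1
      linarith
    have hsq : Real.sqrt L * Real.sqrt L = L := Real.mul_self_sqrt hLpos.le
    have hsqrt8 : 8 ≤ Real.sqrt L := by nlinarith [Real.sqrt_nonneg L]
    have h4l : 4 * l ≤ L := by nlinarith
    set x : ℝ := L / (2 * l) with hxdef
    have hx2 : 2 ≤ x := by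
      rw [hxdef, le_div_iff₀ (by positivity)]
      linarith
    set k : ℕ := ⌊x⌋₊ with hkdef
    have hk1 : 1 ≤ k := Nat.le_floor (by push_cast; linarith)
    have hkx : (k:ℝ) ≤ x := Nat.floor_le (by linarith)
    have hkx2 : x / 2 ≤ (k:ℝ) := by
      have h := Nat.sub_one_lt_floor x
      rw [← hkdef] at h
      linarith
    have hLn : L ≤ (n:ℝ) := by
      have := Real.log_le_sub_one_of_pos hnR
      linarith
    have hx4 : x ≤ L / 4 :=
      div_le_div_of_nonneg_left hLpos.le (by norm_num) (by linarith)
    have h2k : 2 * k ≤ n := by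
      have h2kr : ((2 * k : ℕ) : ℝ) ≤ (n:ℝ) := by
        push_cast
        nlinarith
      exact_mod_cast h2kr
    have h3k : (3 * k) ^ k ≤ n := by
      have h3kpos : (0:ℝ) < 3 * (k:ℝ) := by
        have : (1:ℝ) ≤ (k:ℝ) := by exact_mod_cast hk1
        linarith
      have h3kL : 3 * (k:ℝ) ≤ L := by nlinarith
      have hlog3k : Real.log (3 * (k:ℝ)) ≤ l := by
        rw [hldef]
        exact Real.log_le_log h3kpos h3kL
      have hlog3k0 : 0 ≤ Real.log (3 * (k:ℝ)) := by
        apply Real.log_nonneg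
        have : (1:ℝ) ≤ (k:ℝ) := by exact_mod_cast hk1
        linarith
      have hklog : (k:ℝ) * Real.log (3 * (k:ℝ)) ≤ x * l :=
        mul_le_mul hkx hlog3k hlog3k0 (by linarith)
      have hxl : x * l = L / 2 := by
        rw [hxdef]
        field_simp
      have hfin : Real.log ((3 * (k:ℝ)) ^ k) ≤ Real.log n := by
        rw [Real.log_pow]
        calc (k:ℝ) * Real.log (3 * (k:ℝ)) ≤ x * l := hklog
          _ = L / 2 := hxl
          _ ≤ L := by linarith
      have hr : (3 * (k:ℝ)) ^ k ≤ (n:ℝ) :=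
        (Real.log_le_log_iff (by positivity) hnR).1 hfin
      exact_mod_cast hr
    have hmain := main_bound hn2 hk1 h2k h3k
    calc 1/8 * L / l = (L / (4 * l)) / 2 := by ring
      _ ≤ (k:ℝ) / 2 := by
          have hx44 : x / 2 = L / (4 * l) := by
            rw [hxdef]; ring
          rw [← hx44]
          linarith
      _ ≤ (∑ e : Round n, (M e : ℝ)) / (Fintype.card (Round n)) := hmain
  obtain ⟨N, hN⟩ := Filter.eventually_atTop.1 hev
  exact ⟨N, hN⟩
end

section
/- Let n ≥ 2 and 1 ≤ k ≤ n. Suppose the n edges e_1, …, e_n of a round on n agents are chosen independently and uniformly at random among all C(n,2) unordered pairs of distinct elements of {1, …, n}. Then the probability that the round contains a monotone interference path of length k (i.e., that M(e) ≥ k) is at most 8^k · n / k!. -/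
open Finset

/-- The "tag" of an edge `s'` relative to a previous edge `s`: a boolean saying
whether the chosen common vertex is the minimum of `s`, together with the
other endpoint of `s'`. -/
def tagO {n : ℕ} (s s' : Finset (Fin n)) : Bool × Option (Fin n) :=
  (decide ((s ∩ s').min = s.min),
   WithBot.recBotCoe none
     (fun v => WithBot.recBotCoe none (fun w => some w) ((s'.erase v).min))
     ((s ∩ s').min))

lemma tagO_inj {n : ℕ} {s s₁ s₂ : Finset (Fin n)} (hs : s.card = 2) (h1 : s₁.card = 2)
    (h2 : s₂.card = 2) (hn1 : (s ∩ s₁).Nonempty) (hn2 : (s ∩ s₂).Nonempty)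
    (h : tagO s s₁ = tagO s s₂) : s₁ = s₂ := by
  have hsne : s.Nonempty := Finset.card_pos.mp (by omega)
  set v₁ := (s ∩ s₁).min' hn1 with hv₁
  set v₂ := (s ∩ s₂).min' hn2 with hv₂
  have hm1 : (s ∩ s₁).min = (v₁ : WithBot (Fin n)) := (Finset.coe_min' hn1).symm
  have hm2 : (s ∩ s₂).min = (v₂ : WithBot (Fin n)) := (Finset.coe_min' hn2).symm
  have hv₁s : v₁ ∈ s := (Finset.mem_inter.mp ((s ∩ s₁).min'_mem hn1)).1
  have hv₂s : v₂ ∈ s := (Finset.mem_inter.mp ((s ∩ s₂).min'_mem hn2)).1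
  have hv₁s₁ : v₁ ∈ s₁ := (Finset.mem_inter.mp ((s ∩ s₁).min'_mem hn1)).2
  have hv₂s₂ : v₂ ∈ s₂ := (Finset.mem_inter.mp ((s ∩ s₂).min'_mem hn2)).2
  have hsmM : s = {s.min' hsne, s.max' hsne} := by
    refine (Finset.eq_of_subset_of_card_le ?_ ?_).symm
    · intro x hx
      rcases Finset.mem_insert.mp hx with rfl | hx
      · exact s.min'_mem hsne
      · rw [Finset.mem_singleton.mp hx]; exact s.max'_mem hsne
    · have hlt := Finset.min'_lt_max'_of_card s (by omega)
      rw [hs, Finset.card_insert_of_notMem (by simp [hlt.ne]), Finset.card_singleton]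
  have hsmin : s.min = ((s.min' hsne : Fin n) : WithBot (Fin n)) := (Finset.coe_min' hsne).symm
  rw [tagO, tagO] at h
  have hb' : (decide ((s ∩ s₁).min = s.min)) = (decide ((s ∩ s₂).min = s.min)) :=
    congrArg Prod.fst h
  have hw' := congrArg Prod.snd h
  rw [hm1, hm2] at hb' hw'
  -- first, v₁ = v₂
  have hveq : v₁ = v₂ := by
    by_cases hc : v₁ = s.min' hsne
    · have : ((v₂ : WithBot (Fin n)) = s.min) := by
        rw [decide_eq_decide] at hb'
        exact hb'.mp (by rw [hsmin, hc])
      rw [hsmin] at this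
      have : v₂ = s.min' hsne := WithBot.coe_inj.mp this
      rw [hc, this]
    · have hc2 : ¬ ((v₂ : WithBot (Fin n)) = s.min) := by
        rw [decide_eq_decide] at hb'
        intro hcon
        apply hc
        have := hb'.mpr hcon
        rw [hsmin] at this
        exact WithBot.coe_inj.mp this
      have h1' : v₁ = s.max' hsne := by
        have := hsmM ▸ hv₁s
        rcases Finset.mem_insert.mp this with h' | h'
        · exact absurd h' hc
        · exact Finset.mem_singleton.mp h'
      have h2' : v₂ = s.max' hsne := by
        have hne2 : v₂ ≠ s.min' hsne := by
          intro hcon; exact hc2 (by rw [hsmin, hcon])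
        have := hsmM ▸ hv₂s
        rcases Finset.mem_insert.mp this with h' | h'
        · exact absurd h' hne2
        · exact Finset.mem_singleton.mp h'
      rw [h1', h2']
  -- now the second components
  rw [← hveq] at hv₂s₂ hw'
  simp only at hw'
  change (WithBot.recBotCoe none (fun w => some w) (s₁.erase v₁).min : Option (Fin n)) = (WithBot.recBotCoe none (fun w => some w) (s₂.erase v₁).min : Option (Fin n)) at hw'
  have hc1 : (s₁.erase v₁).card = 1 := by rw [Finset.card_erase_of_mem hv₁s₁, h1]
  have hc2 : (s₂.erase v₁).card = 1 := by rw [Finset.card_erase_of_mem hv₂s₂, h2]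
  obtain ⟨w₁, hw₁⟩ := Finset.card_eq_one.mp hc1
  obtain ⟨w₂, hw₂⟩ := Finset.card_eq_one.mp hc2
  rw [hw₁, hw₂, Finset.min_singleton, Finset.min_singleton] at hw'
  have : w₁ = w₂ := Option.some.inj hw'
  calc s₁ = insert v₁ (s₁.erase v₁) := (Finset.insert_erase hv₁s₁).symm
    _ = insert v₁ (s₂.erase v₁) := by rw [hw₁, hw₂, this]
    _ = s₂ := Finset.insert_erase hv₂s₂

/-- Extraction of a monotone path of length `k` from `k ≤ M e`. -/
lemma exists_path {n k : ℕ} (e : Round n) (hk : k ≤ M e) :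
    ∃ t : Fin k → Fin n, IsMonoPath e t := by
  have h0 : (0 : ℕ) ∈ {m | ∃ t : Fin m → Fin n, IsMonoPath e t} :=
    ⟨Fin.elim0, fun a => a.elim0, fun i => i.elim0⟩
  have hbdd : BddAbove {m | ∃ t : Fin m → Fin n, IsMonoPath e t} := by
    refine ⟨n, fun m hm => ?_⟩
    obtain ⟨t, ht⟩ := hm
    simpa using Fintype.card_le_of_injective t ht.1.injective
  have hmem : M e ∈ {m | ∃ t : Fin m → Fin n, IsMonoPath e t} :=
    Nat.sSup_mem ⟨0, h0⟩ hbdd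
  obtain ⟨t, ht⟩ := hmem
  exact ⟨t ∘ Fin.castLE hk, ht.1.comp (Fin.strictMono_castLE hk),
    fun i j hij => ht.2 _ _ (by simpa using hij)⟩

/-- The fingerprint map used for counting rounds containing a given monotone path. -/
def Ftag {n k : ℕ} (hk : 0 < k) (t : Fin k → Fin n) (e : Round n) :
    Edge n × (Fin (k - 1) → Bool × Option (Fin n)) ×
      ({x : Fin n // x ∉ Set.range t} → Edge n) :=
  ⟨e (t ⟨0, hk⟩),
   fun i => tagO (e (t ⟨i.1, by have := i.isLt; omega⟩)).1
      (e (t ⟨i.1 + 1, by have := i.isLt; omega⟩)).1,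
   fun x => e x.1⟩

lemma Ftag_injOn {n k : ℕ} (hk : 0 < k) (t : Fin k → Fin n) {e e' : Round n}
    (h1 : IsMonoPath e t) (h2 : IsMonoPath e' t) (heq : Ftag hk t e = Ftag hk t e') :
    e = e' := by
  have main : ∀ m, ∀ hm : m < k, e (t ⟨m, hm⟩) = e' (t ⟨m, hm⟩) := by
    intro m
    induction m with
    | zero =>
      intro hm
      have := congrArg Prod.fst heq
      simpa [Ftag] using this
    | succ m ih =>
      intro hm
      have hm' : m < k := Nat.lt_of_succ_lt hm
      have hmk : m < k - 1 := by omega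
      have hs : e (t ⟨m, hm'⟩) = e' (t ⟨m, hm'⟩) := ih hm'
      have htag := congrFun (congrArg (fun p => p.2.1) heq) ⟨m, hmk⟩
      simp only [Ftag] at htag
      -- intersections are nonempty
      have hne1 : ((e (t ⟨m, hm'⟩)).1 ∩ (e (t ⟨m + 1, hm⟩)).1).Nonempty :=
        h1.2 ⟨m, hm'⟩ ⟨m + 1, hm⟩ rfl
      have hne2 : ((e' (t ⟨m, hm'⟩)).1 ∩ (e' (t ⟨m + 1, hm⟩)).1).Nonempty :=
        h2.2 ⟨m, hm'⟩ ⟨m + 1, hm⟩ rfl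
      rw [hs] at htag hne1
      exact Subtype.ext (tagO_inj (e' (t ⟨m, hm'⟩)).2 (e (t ⟨m + 1, hm⟩)).2
        (e' (t ⟨m + 1, hm⟩)).2 hne1 hne2 htag)
  funext x
  by_cases hx : x ∈ Set.range t
  · obtain ⟨i, rfl⟩ := hx
    have := main i.1 i.2
    simpa using this
  · exact congrFun (congrArg (fun p => p.2.2) heq) ⟨x, hx⟩

open scoped Classical in
lemma card_A_le {n k : ℕ} (hk : 0 < k) (hkn : k ≤ n) (t : Fin k → Fin n) (ht : StrictMono t) :
    (Finset.univ.filter fun e : Round n => IsMonoPath e t).card ≤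
      Fintype.card (Edge n) * ((2 * (n + 1)) ^ (k - 1) * Fintype.card (Edge n) ^ (n - k)) := by
  classical
  refine (Finset.card_le_card_of_injOn (t := (Finset.univ : Finset (Edge n ×
      (Fin (k - 1) → Bool × Option (Fin n)) × ({x : Fin n // x ∉ Set.range t} → Edge n))))
    (Ftag hk t) (fun e _ => Finset.mem_univ _)
    (fun e he e' he' heq =>
      Ftag_injOn hk t (Finset.mem_filter.mp he).2 (Finset.mem_filter.mp he').2 heq)).trans ?_
  rw [Finset.card_univ]
  have hrange : Fintype.card {x : Fin n // x ∈ Set.range t} = k := by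
    rw [Fintype.card_congr (Equiv.setCongr rfl)]
    rw [Set.card_range_of_injective ht.injective, Fintype.card_fin]
  have hcompl : Fintype.card {x : Fin n // x ∉ Set.range t} = n - k := by
    rw [Fintype.card_subtype_compl, Fintype.card_fin, hrange]
  rw [Fintype.card_prod, Fintype.card_prod, Fintype.card_fun, Fintype.card_fun,
    Fintype.card_prod, Fintype.card_bool, Fintype.card_option, Fintype.card_fin,
    Fintype.card_fin, hcompl]

lemma count_bound {n k : ℕ} (hk : 0 < k) (hkn : k ≤ n) :
    Nat.card {e : Round n // k ≤ M e} ≤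
      n.choose k * (Fintype.card (Edge n) *
        ((2 * (n + 1)) ^ (k - 1) * Fintype.card (Edge n) ^ (n - k))) := by
  classical
  rw [Nat.card_eq_fintype_card, Fintype.card_subtype]
  set B := Fintype.card (Edge n) * ((2 * (n + 1)) ^ (k - 1) * Fintype.card (Edge n) ^ (n - k))
    with hB
  set T := (Finset.univ : Finset (Fin k → Fin n)).filter StrictMono with hT
  have hsub : (Finset.univ.filter fun e : Round n => k ≤ M e) ⊆
      T.biUnion fun t => Finset.univ.filter fun e => IsMonoPath e t := by
    intro e he
    obtain ⟨t, ht⟩ := exists_path e (Finset.mem_filter.mp he).2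
    exact Finset.mem_biUnion.mpr ⟨t, Finset.mem_filter.mpr ⟨Finset.mem_univ _, ht.1⟩,
      Finset.mem_filter.mpr ⟨Finset.mem_univ _, ht⟩⟩
  have hTcard : T.card ≤ n.choose k := by
    have h1 : T.card ≤ (Finset.powersetCard k (Finset.univ : Finset (Fin n))).card := by
      apply Finset.card_le_card_of_injOn (fun t => Finset.univ.image t)
      · intro t htm
        have hmono := (Finset.mem_filter.mp htm).2
        rw [Finset.mem_coe, Finset.mem_powersetCard]
        refine ⟨Finset.subset_univ _, ?_⟩
        rw [Finset.card_image_of_injective _ hmono.injective, Finset.card_univ,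
          Fintype.card_fin]
      · intro t1 ht1 t2 ht2 himg
        have hm1 := (Finset.mem_filter.mp ht1).2
        have hm2 := (Finset.mem_filter.mp ht2).2
        have himg' : Finset.univ.image t1 = Finset.univ.image t2 := himg
        have hcard1 : (Finset.univ.image t1).card = k := by
          rw [Finset.card_image_of_injective _ hm1.injective, Finset.card_univ,
            Fintype.card_fin]
        have e1 := Finset.orderEmbOfFin_unique hcard1
          (fun x => Finset.mem_image_of_mem _ (Finset.mem_univ x)) hm1
        have e2 := Finset.orderEmbOfFin_unique hcard1
          (fun x => himg'.symm ▸ Finset.mem_image_of_mem t2 (Finset.mem_univ x)) hm2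
        exact e1.trans e2.symm
    rwa [Finset.card_powersetCard, Finset.card_univ, Fintype.card_fin] at h1
  calc (Finset.univ.filter fun e : Round n => k ≤ M e).card
      ≤ (T.biUnion fun t => Finset.univ.filter fun e => IsMonoPath e t).card :=
        Finset.card_le_card hsub
    _ ≤ ∑ t ∈ T, (Finset.univ.filter fun e => IsMonoPath e t).card :=
        Finset.card_biUnion_le
    _ ≤ ∑ _t ∈ T, B := Finset.sum_le_sum fun t htm =>
        card_A_le hk hkn t (Finset.mem_filter.mp htm).2
    _ = T.card * B := by rw [Finset.sum_const, smul_eq_mul]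
    _ ≤ n.choose k * B := Nat.mul_le_mul_right _ hTcard

/-- Let `n ≥ 2` and `1 ≤ k ≤ n`, and choose the `n` edges of a
round on `n` agents independently and uniformly at random (i.e. uniformly over
all rounds). Then the probability that the round contains a monotone
interference path of length `k` (i.e. that `M e ≥ k`) is at most
`8^k * n / k!`. -/
theorem stmt7 (n k : ℕ) (hn : 2 ≤ n) (hk1 : 1 ≤ k) (hkn : k ≤ n) :
    (Nat.card {e : Round n // k ≤ M e} : ℝ) / (Fintype.card (Round n)) ≤
      8 ^ k * (n : ℝ) / (k.factorial : ℝ) := by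
  classical
  set E := Fintype.card (Edge n) with hE
  have hEchoose : E = n.choose 2 := by
    rw [hE, Fintype.card_finset_len, Fintype.card_fin]
  have hEpos : 0 < E := by rw [hEchoose]; exact Nat.choose_pos hn
  have htotal : Fintype.card (Round n) = E ^ n := by
    rw [Fintype.card_fun, Fintype.card_fin]
  set N := Nat.card {e : Round n // k ≤ M e} with hN
  have key : N * k.factorial ≤ 8 ^ k * n * E ^ n := by
    by_cases htriv : k.factorial ≤ 8 ^ k * n
    · have hNle : N ≤ E ^ n := by
        rw [hN, Nat.card_eq_fintype_card, ← htotal]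
        exact Fintype.card_subtype_le _
      calc N * k.factorial ≤ E ^ n * (8 ^ k * n) := Nat.mul_le_mul hNle htriv
        _ = 8 ^ k * n * E ^ n := by ring
    · -- nontrivial case: here necessarily n ≥ 3
      have hn3 : 3 ≤ n := by
        by_contra hlt
        have hn2 : n = 2 := by omega
        have hk2 : k ≤ 2 := hn2 ▸ hkn
        have hf2 : k.factorial ≤ 2 := by interval_cases k <;> simp [Nat.factorial]
        have h8 : 8 ≤ 8 ^ k := by
          calc 8 = 8 ^ 1 := (pow_one 8).symm
          _ ≤ 8 ^ k := Nat.pow_le_pow_right (by norm_num) hk1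
        have h8n : 8 ^ k ≤ 8 ^ k * n := Nat.le_mul_of_pos_right _ (by omega)
        exact htriv (by omega)
      have hcb := count_bound (n := n) (k := k) hk1 hkn
      rw [← hN, ← hE] at hcb
      -- arithmetic
      have c1 : n.choose k * k.factorial ≤ n ^ k := by
        have h := Nat.descFactorial_le_pow n k
        rw [Nat.descFactorial_eq_factorial_mul_choose] at h
        calc n.choose k * k.factorial = k.factorial * n.choose k := Nat.mul_comm _ _
          _ ≤ n ^ k := h
      have h8E : 2 * n * (n + 1) ≤ 8 * E := by
        obtain ⟨p, hp⟩ : ∃ p, n = p + 1 := ⟨n - 1, by omega⟩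
        have hp2 : 2 ≤ p := by omega
        rw [hEchoose, Nat.choose_two_right, hp]
        simp only [Nat.add_sub_cancel]
        have hdvd : 2 ∣ (p + 1) * p := by
          rw [Nat.mul_comm]; exact (Nat.even_mul_succ_self p).two_dvd
        have hcan : (p + 1) * p / 2 * 2 = (p + 1) * p := Nat.div_mul_cancel hdvd
        nlinarith [hcan, hp2]
      obtain ⟨m, hkm⟩ : ∃ m, k = m + 1 := ⟨k - 1, by omega⟩
      obtain ⟨r, hr⟩ : ∃ r, n = k + r := ⟨n - k, by omega⟩
      have hk1' : k - 1 = m := by omega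
      have hnk : n - k = r := by omega
      have hEn : E ^ n = E ^ m * E ^ r * E := by
        rw [hr, hkm]; ring
      calc N * k.factorial
          ≤ n.choose k * (E * ((2 * (n + 1)) ^ (k - 1) * E ^ (n - k))) * k.factorial :=
            Nat.mul_le_mul_right _ hcb
        _ = (n.choose k * k.factorial) * ((2 * (n + 1)) ^ m * E ^ r * E) := by
            rw [hk1', hnk]; ring
        _ ≤ n ^ k * ((2 * (n + 1)) ^ m * E ^ r * E) := Nat.mul_le_mul_right _ c1
        _ = (n * (2 * (n + 1))) ^ m * (n * (E ^ r * E)) := by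
            rw [hkm, pow_succ, mul_pow n (2 * (n + 1)) m]; ring
        _ ≤ (8 * E) ^ m * (n * (E ^ r * E)) := by
            refine Nat.mul_le_mul_right _ (Nat.pow_le_pow_left ?_ m)
            calc n * (2 * (n + 1)) = 2 * n * (n + 1) := by ring
              _ ≤ 8 * E := h8E
        _ = 8 ^ m * (E ^ m * (n * (E ^ r * E))) := by rw [mul_pow]; ring
        _ ≤ 8 ^ k * (E ^ m * (n * (E ^ r * E))) := by
            have h8k : (8:ℕ) ^ m ≤ 8 ^ k := Nat.pow_le_pow_right (by norm_num) (by omega)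
            exact Nat.mul_le_mul_right _ h8k
        _ = 8 ^ k * n * E ^ n := by rw [hEn]; ring
  -- conclude over ℝ
  rw [htotal]
  have hkf : (0:ℝ) < (k.factorial : ℝ) := by exact_mod_cast k.factorial_pos
  have hEn : (0:ℝ) < ((E:ℝ) ^ n) := by positivity
  rw [div_le_div_iff₀ (by exact_mod_cast hEn) hkf]
  exact_mod_cast key
end

section
/- For every constant c > 0 there exists an integer N such that for every n ≥ N, setting k = ⌈(c+3) · (log n)/(log log n)⌉, one has 8^k · n / k! ≤ n^{−c}. -/
lemma fact_lower (k : ℕ) : ((k : ℝ) / Real.exp 1) ^ k ≤ (k.factorial : ℝ) := by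
  induction k with
  | zero => norm_num
  | succ k ih =>
    rcases Nat.eq_zero_or_pos k with hk | hk
    · subst hk
      have he := Real.exp_pos 1
      have h1 : (1:ℝ) ≤ Real.exp 1 := by
        have := Real.add_one_le_exp (1:ℝ); linarith
      simp only [Nat.cast_one, pow_one, Nat.factorial_one, Nat.cast_one,
        Nat.zero_add, Nat.cast_ofNat]
      norm_num
      rw [inv_le_one_iff₀]
      right; exact h1
    · have hkR : (0:ℝ) < k := by exact_mod_cast hk
      have he : (0:ℝ) < Real.exp 1 := Real.exp_pos 1
      have h1 : ((k:ℝ)+1)/k ≤ Real.exp (1/k) := by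
        rw [div_le_iff₀ hkR]
        have h := Real.add_one_le_exp (1/(k:ℝ))
        have heq : ((1:ℝ)/k + 1) * k = (k:ℝ) + 1 := by field_simp; ring
        nlinarith [Real.add_one_le_exp (1/(k:ℝ))]
      have h2 : (((k:ℝ)+1)/k) ^ k ≤ Real.exp 1 := by
        have := pow_le_pow_left₀ (by positivity) h1 k
        rwa [← Real.exp_nat_mul, mul_one_div, div_self (ne_of_gt hkR)] at this
      have key : (((k:ℝ)+1)/Real.exp 1) ^ k ≤ Real.exp 1 * (k.factorial : ℝ) := by
        have hsplit : (((k:ℝ)+1)/Real.exp 1) ^ k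
            = (((k:ℝ)+1)/k) ^ k * ((k:ℝ)/Real.exp 1) ^ k := by
          rw [← mul_pow]
          congr 1
          field_simp
        rw [hsplit]
        exact mul_le_mul h2 ih (by positivity) he.le
      have main : (((k+1:ℕ):ℝ)/Real.exp 1) ^ (k+1) ≤ ((k:ℝ)+1) * (k.factorial : ℝ) := by
        push_cast
        rw [pow_succ]
        have step := mul_le_mul_of_nonneg_right key
          (show (0:ℝ) ≤ ((k:ℝ)+1)/Real.exp 1 by positivity)
        refine step.trans_eq ?_
        field_simp
      refine main.trans_eq ?_
      rw [Nat.factorial_succ]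
      push_cast
      ring


lemma key_lemma (c : ℝ) (hc : 0 < c) (n : ℕ)
    (hL : 1 ≤ Real.log n) (hl : 1 ≤ Real.log (Real.log n))
    (hmain : (c + 3) * (Real.log (Real.log (Real.log n)) / Real.log (Real.log n))
      + (c + 3) * (1 + Real.log 8) * (1 / Real.log (Real.log n))
      + (1 + Real.log 8) * (1 / Real.log n) ≤ 2) :
    ∀ k : ℕ, k = ⌈(c + 3) * Real.log n / Real.log (Real.log n)⌉₊ →
      8 ^ k * (n : ℝ) / (k.factorial : ℝ) ≤ (n : ℝ) ^ (-c) := by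
  intro k hk
  set L := Real.log n with hLdef
  set l := Real.log L with hldef
  set a := 1 + Real.log 8 with hadef
  have hL0 : (0:ℝ) < L := by linarith
  have hl0 : (0:ℝ) < l := by linarith
  have ha0 : (0:ℝ) < a := by
    have : (0:ℝ) ≤ Real.log 8 := Real.log_nonneg (by norm_num)
    linarith
  have hn1 : (1:ℝ) < (n:ℝ) := by
    by_contra h
    push_neg at h
    have : L ≤ 0 := Real.log_nonpos (by positivity) h
    linarith
  have hn0 : (0:ℝ) < (n:ℝ) := by linarith
  set x := (c + 3) * L / l with hxdef
  have hx0 : 0 < x := by positivity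
  have hk0 : 0 < k := by rw [hk]; exact Nat.ceil_pos.mpr hx0
  have hkR0 : (0:ℝ) < (k:ℝ) := by exact_mod_cast hk0
  have hkx : x ≤ (k:ℝ) := by rw [hk]; exact Nat.le_ceil x
  have hkx' : (k:ℝ) ≤ x + 1 := by
    rw [hk]; exact (Nat.ceil_lt_add_one hx0.le).le
  -- lower bound on log k
  have hLl : L / l ≤ (k:ℝ) := by
    refine le_trans ?_ hkx
    rw [hxdef]
    rw [div_le_div_iff₀ hl0 hl0]
    nlinarith [mul_pos hL0 hl0, hc.le]
  have hlogk : l - Real.log l ≤ Real.log k := by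
    have h1 : Real.log (L / l) ≤ Real.log k :=
      Real.log_le_log (by positivity) hLl
    rwa [Real.log_div (ne_of_gt hL0) (ne_of_gt hl0)] at h1
  have hll0 : 0 ≤ l - Real.log l := by
    have := Real.log_le_sub_one_of_pos hl0
    linarith
  have hklogk : x * (l - Real.log l) ≤ (k:ℝ) * Real.log k :=
    mul_le_mul hkx hlogk hll0 hkR0.le
  have hxll : x * (l - Real.log l) = (c+3)*L - (c+3)*L*(Real.log l / l) := by
    rw [hxdef]
    field_simp
  -- main arithmetic inequality
  have h2L : (c+3)*L*(Real.log l / l) + x * a + a ≤ 2 * L := by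
    have h3 := mul_le_mul_of_nonneg_right hmain hL0.le
    have e1 : ((c + 3) * (Real.log l / l) + (c + 3) * a * (1 / l)
        + a * (1 / L)) * L
        = (c+3)*L*(Real.log l / l) + x * a + a * (1/L) * L := by
      rw [hxdef]; ring
    have e2 : a * (1/L) * L = a := by field_simp
    rw [e1, e2] at h3
    linarith
  have hD : (1+c)*L + (k:ℝ)*a ≤ (k:ℝ) * Real.log k := by
    have hka : (k:ℝ)*a ≤ (x+1)*a := mul_le_mul_of_nonneg_right hkx' ha0.le
    nlinarith [hka, hklogk, hxll, h2L]
  -- conclude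
  have hfact0 : (0:ℝ) < (k.factorial : ℝ) := by
    exact_mod_cast Nat.factorial_pos k
  rw [div_le_iff₀ hfact0]
  have hrpow0 : (0:ℝ) < (n:ℝ) ^ (-c) := Real.rpow_pos_of_pos hn0 _
  have step1 : (n:ℝ)^(-c) * (((k:ℝ)/Real.exp 1)^k) ≤ (n:ℝ)^(-c) * (k.factorial : ℝ) :=
    mul_le_mul_of_nonneg_left (fact_lower k) hrpow0.le
  refine le_trans ?_ step1
  have hlhs0 : (0:ℝ) < 8 ^ k * (n:ℝ) := by positivity
  have hrhs0 : (0:ℝ) < (n:ℝ)^(-c) * (((k:ℝ)/Real.exp 1)^k) := by positivity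
  rw [← Real.log_le_log_iff hlhs0 hrhs0]
  rw [Real.log_mul (by positivity) (ne_of_gt hn0),
    Real.log_mul (ne_of_gt hrpow0) (by positivity),
    Real.log_pow, Real.log_pow, Real.log_rpow hn0,
    Real.log_div (ne_of_gt hkR0) (ne_of_gt (Real.exp_pos 1)),
    Real.log_exp]
  have hexpand : (k:ℝ) * a = (k:ℝ) + (k:ℝ) * Real.log 8 := by rw [hadef]; ring
  have hexp2 : (k:ℝ) * (Real.log k - 1) = (k:ℝ) * Real.log k - k := by ring
  linarith [hD, hexpand, hexp2]



open Finset

/-- For every constant `c > 0` there exists an integer `N` such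
that for every `n ≥ N`, setting `k = ⌈(c+3) * log n / log (log n)⌉`, one has
`8^k * n / k! ≤ n^(-c)`. -/
theorem stmt9 (c : ℝ) (hc : 0 < c) :
    ∃ N : ℕ, ∀ n : ℕ, N ≤ n →
      ∀ k : ℕ, k = ⌈(c + 3) * Real.log n / Real.log (Real.log n)⌉₊ →
        8 ^ k * (n : ℝ) / (k.factorial : ℝ) ≤ (n : ℝ) ^ (-c) := by
  have hL : Filter.Tendsto (fun n : ℕ => Real.log n) Filter.atTop Filter.atTop :=
    Real.tendsto_log_atTop.comp tendsto_natCast_atTop_atTop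
  have hl : Filter.Tendsto (fun n : ℕ => Real.log (Real.log n)) Filter.atTop Filter.atTop :=
    Real.tendsto_log_atTop.comp hL
  have h1 : Filter.Tendsto (fun n : ℕ =>
      Real.log (Real.log (Real.log n)) / Real.log (Real.log n)) Filter.atTop (nhds 0) :=
    (Real.isLittleO_log_id_atTop.tendsto_div_nhds_zero).comp hl
  have h2 : Filter.Tendsto (fun n : ℕ => 1 / Real.log (Real.log n)) Filter.atTop (nhds 0) := by
    simpa [one_div, Pi.inv_def] using hl.inv_tendsto_atTop
  have h3 : Filter.Tendsto (fun n : ℕ => 1 / Real.log n) Filter.atTop (nhds 0) := by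
    simpa [one_div, Pi.inv_def] using hL.inv_tendsto_atTop
  have htot : Filter.Tendsto (fun n : ℕ =>
      (c + 3) * (Real.log (Real.log (Real.log n)) / Real.log (Real.log n))
      + (c + 3) * (1 + Real.log 8) * (1 / Real.log (Real.log n))
      + (1 + Real.log 8) * (1 / Real.log n)) Filter.atTop (nhds 0) := by
    have := ((h1.const_mul (c+3)).add (h2.const_mul ((c+3)*(1 + Real.log 8)))).add
      (h3.const_mul (1 + Real.log 8))
    simpa using this
  have hev : ∀ᶠ n : ℕ in Filter.atTop, (1 ≤ Real.log n ∧ 1 ≤ Real.log (Real.log n) ∧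
      (c + 3) * (Real.log (Real.log (Real.log n)) / Real.log (Real.log n))
      + (c + 3) * (1 + Real.log 8) * (1 / Real.log (Real.log n))
      + (1 + Real.log 8) * (1 / Real.log n) ≤ 2) := by
    filter_upwards [hL.eventually_ge_atTop 1, hl.eventually_ge_atTop 1,
      htot.eventually (gt_mem_nhds (by norm_num : (0:ℝ) < 2))] with n hn1 hn2 hn3
    exact ⟨hn1, hn2, hn3.le⟩
  rw [Filter.eventually_atTop] at hev
  obtain ⟨N, hN⟩ := hev
  refine ⟨N, fun n hn => ?_⟩
  obtain ⟨ha, hb, hcc⟩ := hN n hn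
  exact key_lemma c hc n ha hb hcc
end

section
/- There exist a constant C > 0 and an integer N such that for every n ≥ N, when the n edges e_1, …, e_n of a round on n agents are chosen independently and uniformly at random among all C(n,2) unordered pairs of distinct elements of {1, …, n}, the expected value of M(e), the maximum length of a monotone interference path in the round (equivalently, one plus the maximum length of a directed path in the dependency DAG of the round), is at most C · (log n)/(log log n). -/
open Finset

open scoped Classical

/-- Chains of edges: consecutive edges intersect. -/
def EChain {n k : ℕ} (g : Fin k → Edge n) : Prop :=
  ∀ i j : Fin k, (i : ℕ) + 1 = (j : ℕ) → ((g i).1 ∩ (g j).1).Nonempty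

lemma card_mem_le {n : ℕ} (a : Fin n) : Fintype.card {x : Edge n // a ∈ x.1} ≤ n := by
  classical
  have hne : ∀ x : {x : Edge n // a ∈ x.1}, (x.1.1.erase a).Nonempty := by
    intro x
    have h1 : (x.1.1.erase a).card = 1 := by
      rw [Finset.card_erase_of_mem x.2, x.1.2]
    rw [← Finset.card_pos, h1]; norm_num
  have hinj : Function.Injective
      (fun x : {x : Edge n // a ∈ x.1} => (x.1.1.erase a).min' (hne x)) := by
    intro x y hxy
    have h1 : (x.1.1.erase a).card = 1 := by
      rw [Finset.card_erase_of_mem x.2, x.1.2]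
    have h2 : (y.1.1.erase a).card = 1 := by
      rw [Finset.card_erase_of_mem y.2, y.1.2]
    obtain ⟨u, hu⟩ := Finset.card_eq_one.1 h1
    obtain ⟨v, hv⟩ := Finset.card_eq_one.1 h2
    simp only [hu, hv, Finset.min'_singleton] at hxy
    subst hxy
    have hx : x.1.1 = insert a {u} := by
      rw [← hu, Finset.insert_erase x.2]
    have hy : y.1.1 = insert a {u} := by
      rw [← hv, Finset.insert_erase y.2]
    exact Subtype.ext (Subtype.ext (hx.trans hy.symm))
  calc Fintype.card {x : Edge n // a ∈ x.1} ≤ Fintype.card (Fin n) :=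
        Fintype.card_le_of_injective _ hinj
    _ = n := Fintype.card_fin n

lemma card_meet_le {n : ℕ} (s : Finset (Fin n)) (hs : s.card = 2) :
    Fintype.card {x : Edge n // (x.1 ∩ s).Nonempty} ≤ 2 * n := by
  classical
  obtain ⟨a, b, hab, rfl⟩ := Finset.card_eq_two.1 hs
  have hsub : ∀ x : Edge n, (x.1 ∩ ({a, b} : Finset (Fin n))).Nonempty →
      (a ∈ x.1 ∨ b ∈ x.1) := by
    intro x ⟨c, hc⟩
    rw [Finset.mem_inter] at hc
    rcases Finset.mem_insert.1 hc.2 with h | h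
    · left; rw [← h]; exact hc.1
    · right; rw [← Finset.mem_singleton.1 h]; exact hc.1
  have h1 : Fintype.card {x : Edge n // (x.1 ∩ ({a, b} : Finset (Fin n))).Nonempty}
      ≤ Fintype.card {x : Edge n // a ∈ x.1 ∨ b ∈ x.1} := by
    apply Fintype.card_le_of_injective (fun x => ⟨x.1, hsub x.1 x.2⟩)
    intro x y hxy
    simp only [Subtype.mk.injEq] at hxy
    exact Subtype.ext hxy
  have h2 := Fintype.card_subtype_or (fun x : Edge n => a ∈ x.1) (fun x : Edge n => b ∈ x.1)
  have := card_mem_le a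
  have := card_mem_le b
  omega


lemma echain_cons_iff {n k : ℕ} (x : Edge n) (h : Fin (k + 1) → Edge n) :
    EChain (Fin.cons x h) ↔ ((x.1 ∩ (h 0).1).Nonempty ∧ EChain h) := by
  constructor
  · intro hc
    constructor
    · have := hc 0 1 rfl
      simpa using this
    · intro i j hij
      have := hc i.succ j.succ (by simp [hij])
      simpa using this
  · rintro ⟨h0, hc⟩ i j hij
    rcases Fin.eq_zero_or_eq_succ j with rfl | ⟨j', rfl⟩
    · simp at hij
    rcases Fin.eq_zero_or_eq_succ i with rfl | ⟨i', rfl⟩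
    · have hj : (j' : ℕ) = 0 := by
        have := hij
        simp [Fin.val_succ] at this
        simp [this]
      have : j' = 0 := Fin.ext (by simp [hj])
      subst this
      simpa using h0
    · have : (i' : ℕ) + 1 = (j' : ℕ) := by simpa using hij
      have := hc i' j' this
      simpa using this

lemma echain_tail {n k : ℕ} {g : Fin (k + 2) → Edge n} (hg : EChain g) :
    EChain (Fin.tail g) := by
  intro i j hij
  have := hg i.succ j.succ (by simp [hij])
  simpa [Fin.tail] using this

instance {n k : ℕ} : DecidablePred (fun g : Fin k → Edge n => EChain g) := fun g => by
  unfold EChain; infer_instance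

lemma card_echain_le {n : ℕ} : ∀ k : ℕ,
    Fintype.card {g : Fin (k + 1) → Edge n // EChain g} ≤
      Fintype.card (Edge n) * (2 * n) ^ k := by
  intro k
  induction k with
  | zero =>
    have : Fintype.card {g : Fin 1 → Edge n // EChain g} = Fintype.card (Fin 1 → Edge n) := by
      apply Fintype.card_congr
      apply Equiv.subtypeUnivEquiv
      intro g i j hij
      omega
    rw [this]
    simp [Fintype.card_fun]
  | succ k ih =>
    classical
    have hEquiv : {g : Fin (k + 2) → Edge n // EChain g} ≃
        Σ h : {h : Fin (k + 1) → Edge n // EChain h},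
          {x : Edge n // (x.1 ∩ (h.1 0).1).Nonempty} :=
      { toFun := fun g => ⟨⟨Fin.tail g.1, echain_tail g.2⟩,
          ⟨g.1 0, by
            have := g.2 0 1 rfl
            simpa [Fin.tail] using this⟩⟩
        invFun := fun p => ⟨Fin.cons p.2.1 p.1.1,
          (echain_cons_iff _ _).2 ⟨p.2.2, p.1.2⟩⟩
        left_inv := fun g => Subtype.ext (Fin.cons_self_tail g.1)
        right_inv := fun p => by
          rcases p with ⟨⟨h, hh⟩, ⟨x, hx⟩⟩
          rfl }
    rw [Fintype.card_congr hEquiv, Fintype.card_sigma]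
    calc (∑ h : {h : Fin (k + 1) → Edge n // EChain h},
            Fintype.card {x : Edge n // (x.1 ∩ (h.1 0).1).Nonempty})
        ≤ ∑ _h : {h : Fin (k + 1) → Edge n // EChain h}, 2 * n := by
          apply Finset.sum_le_sum
          intro h _
          exact card_meet_le _ (h.1 0).2
      _ = Fintype.card {h : Fin (k + 1) → Edge n // EChain h} * (2 * n) := by
          rw [Finset.sum_const, smul_eq_mul, Finset.card_univ]
      _ ≤ Fintype.card (Edge n) * (2 * n) ^ k * (2 * n) := by
          exact Nat.mul_le_mul_right _ ih
      _ = Fintype.card (Edge n) * (2 * n) ^ (k + 1) := by ring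

lemma card_pathAt_le {n k : ℕ} (t : Fin k → Fin n) (ht : Function.Injective t) :
    Fintype.card {e : Round n // EChain (fun i => e (t i))} ≤
      Fintype.card {g : Fin k → Edge n // EChain g} *
        Fintype.card (Edge n) ^ (n - k) := by
  classical
  let inv : {g : Fin k → Edge n // EChain g} × ({i : Fin n // i ∉ Set.range t} → Edge n) →
      Round n := fun p i =>
    if h : ∃ j, t j = i then p.1.1 h.choose else p.2 ⟨i, by
      intro hmem
      exact h (by rwa [Set.mem_range] at hmem)⟩
  have hinvt : ∀ p j, inv p (t j) = p.1.1 j := by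
    intro p j
    have hex : ∃ j', t j' = t j := ⟨j, rfl⟩
    have : hex.choose = j := ht hex.choose_spec
    simp only [inv, dif_pos hex, this]
  have hEquiv : {e : Round n // EChain (fun i => e (t i))} ≃
      {g : Fin k → Edge n // EChain g} × ({i : Fin n // i ∉ Set.range t} → Edge n) :=
    { toFun := fun e => (⟨fun i => e.1 (t i), e.2⟩, fun i => e.1 i.1)
      invFun := fun p => ⟨inv p, by
        have : (fun i => inv p (t i)) = p.1.1 := funext (hinvt p)
        rw [this]; exact p.1.2⟩
      left_inv := fun e => by
        apply Subtype.ext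
        funext i
        by_cases h : ∃ j, t j = i
        · obtain ⟨j, rfl⟩ := h
          exact hinvt _ j
        · simp only [inv, dif_neg h]
      right_inv := fun p => by
        have h1 : (fun i => inv p (t i)) = p.1.1 := funext (hinvt p)
        have h2 : (fun i : {i : Fin n // i ∉ Set.range t} => inv p i.1) = p.2 := by
          funext i
          have h : ¬∃ j, t j = i.1 := by
            intro ⟨j, hj⟩
            exact i.2 ⟨j, hj⟩
          show dite _ _ _ = _
          rw [dif_neg h]
        exact Prod.ext (Subtype.ext h1) h2 }
  rw [Fintype.card_congr hEquiv, Fintype.card_prod, Fintype.card_fun]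
  have hcard : Fintype.card {i : Fin n // i ∉ Set.range t} = n - k := by
    rw [Fintype.card_subtype_compl]
    have h1 : Fintype.card {i : Fin n // i ∈ Set.range t} = k := by
      rw [Fintype.card_congr (Equiv.ofInjective t ht).symm, Fintype.card_fin]
    rw [h1, Fintype.card_fin]
  rw [hcard]

/-- Number of strictly monotone maps `Fin k → Fin n` is at most `n.choose k`. -/
lemma card_strictMono_le (n k : ℕ) :
    (Finset.univ.filter (fun t : Fin k → Fin n => StrictMono t)).card ≤ n.choose k := by
  classical
  have : ∀ t ∈ Finset.univ.filter (fun t : Fin k → Fin n => StrictMono t),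
      Finset.image t Finset.univ ∈ Finset.univ.powersetCard k := by
    intro t ht
    rw [Finset.mem_filter] at ht
    rw [Finset.mem_powersetCard]
    refine ⟨Finset.subset_univ _, ?_⟩
    rw [Finset.card_image_of_injective _ ht.2.injective, Finset.card_univ, Fintype.card_fin]
  calc (Finset.univ.filter (fun t : Fin k → Fin n => StrictMono t)).card
      ≤ (Finset.univ.powersetCard k : Finset (Finset (Fin n))).card := by
        apply Finset.card_le_card_of_injOn (fun t => Finset.image t Finset.univ) this
        intro t ht u hu htu
        rw [Finset.mem_coe, Finset.mem_filter] at ht hu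
        have hset : Set.range t = Set.range u := by
          have h := congrArg (fun (s : Finset (Fin n)) => (s : Set (Fin n))) htu
          simpa [Finset.coe_image, Set.image_univ] using h
        haveI : WellFoundedLT (Fin k) := inferInstance
        exact (ht.2.range_inj hu.2).1 hset
    _ = n.choose k := by
        rw [Finset.card_powersetCard, Finset.card_univ, Fintype.card_fin]

/-- Union bound: number of rounds containing a monotone path of length `k`. -/
lemma card_hasPath_le (n k : ℕ) :
    Fintype.card {e : Round n // ∃ t : Fin k → Fin n, IsMonoPath e t} ≤
      n.choose k * (Fintype.card {g : Fin k → Edge n // EChain g} *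
        Fintype.card (Edge n) ^ (n - k)) := by
  classical
  have hsub : Finset.univ.filter (fun e : Round n => ∃ t : Fin k → Fin n, IsMonoPath e t) ⊆
      (Finset.univ.filter (fun t : Fin k → Fin n => StrictMono t)).biUnion
        (fun t => Finset.univ.filter (fun e : Round n => EChain (fun i => e (t i)))) := by
    intro e he
    rw [Finset.mem_filter] at he
    obtain ⟨t, ht⟩ := he.2
    rw [Finset.mem_biUnion]
    exact ⟨t, by simp [ht.1], by simp [Finset.mem_filter]; exact ht.2⟩
  calc Fintype.card {e : Round n // ∃ t : Fin k → Fin n, IsMonoPath e t}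
      = (Finset.univ.filter (fun e : Round n => ∃ t : Fin k → Fin n, IsMonoPath e t)).card :=
        Fintype.card_subtype _
    _ ≤ _ := Finset.card_le_card hsub
    _ ≤ ∑ t ∈ Finset.univ.filter (fun t : Fin k → Fin n => StrictMono t),
          (Finset.univ.filter (fun e : Round n => EChain (fun i => e (t i)))).card :=
        Finset.card_biUnion_le
    _ ≤ ∑ _t ∈ Finset.univ.filter (fun t : Fin k → Fin n => StrictMono t),
          (Fintype.card {g : Fin k → Edge n // EChain g} *
            Fintype.card (Edge n) ^ (n - k)) := by
        apply Finset.sum_le_sum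
        intro t ht
        rw [Finset.mem_filter] at ht
        rw [← Fintype.card_subtype]
        exact card_pathAt_le t ht.2.injective
    _ ≤ n.choose k * _ := by
        rw [Finset.sum_const, smul_eq_mul]
        exact Nat.mul_le_mul_right _ (card_strictMono_le n k)

lemma monoPath_bound {n k : ℕ} {e : Round n} {t : Fin k → Fin n}
    (h : IsMonoPath e t) : k ≤ n := by
  simpa using Fintype.card_le_of_injective t h.1.injective

lemma M_le {n : ℕ} (e : Round n) : M e ≤ n := by
  apply csSup_le'
  rintro k ⟨t, ht⟩
  exact monoPath_bound ht

lemma exists_path_of_le_M {n k : ℕ} {e : Round n} (h : k ≤ M e) :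
    ∃ t : Fin k → Fin n, IsMonoPath e t := by
  have hne : {m | ∃ t : Fin m → Fin n, IsMonoPath e t}.Nonempty := by
    refine ⟨0, Fin.elim0, fun i => i.elim0, fun i => i.elim0⟩
  have hbdd : BddAbove {m | ∃ t : Fin m → Fin n, IsMonoPath e t} := by
    refine ⟨n, ?_⟩
    rintro m ⟨t, ht⟩
    exact monoPath_bound ht
  have hmem : M e ∈ {m | ∃ t : Fin m → Fin n, IsMonoPath e t} := Nat.sSup_mem hne hbdd
  obtain ⟨t, ht⟩ := hmem
  refine ⟨t ∘ Fin.castLE h, ?_, ?_⟩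
  · exact ht.1.comp (Fin.strictMono_castLE h)
  · intro i j hij
    exact ht.2 (Fin.castLE h i) (Fin.castLE h j) (by simpa using hij)

lemma factorial_lower (m : ℕ) : (m / 2 + 1) ^ (m / 2) ≤ m.factorial := by
  calc (m / 2 + 1) ^ (m / 2) ≤ (m / 2 + 1) ^ (m - m / 2) :=
        Nat.pow_le_pow_right (by omega) (by omega)
    _ = ∏ _i ∈ Finset.Ico (m / 2) m, (m / 2 + 1) := by
        rw [Finset.prod_const, Nat.card_Ico]
    _ ≤ ∏ i ∈ Finset.Ico (m / 2) m, (i + 1) := by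
        apply Finset.prod_le_prod'
        intro i hi
        rw [Finset.mem_Ico] at hi
        omega
    _ ≤ ∏ i ∈ Finset.range m, (i + 1) := by
        apply Finset.prod_le_prod_of_subset_of_one_le'
        · intro i hi
          rw [Finset.mem_Ico] at hi
          rw [Finset.mem_range]
          omega
        · intro i _ _
          omega
    _ = m.factorial := Finset.prod_range_add_one_eq_factorial m

lemma log_le_half {x : ℝ} (hx : 16 ≤ x) : Real.log x ≤ x / 2 := by
  have hx0 : (0:ℝ) < x := by linarith
  have hs4 : (4:ℝ) ≤ Real.sqrt x := by
    rw [show (4:ℝ) = Real.sqrt 16 by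
      rw [show (16:ℝ) = 4^2 by norm_num, Real.sqrt_sq (by norm_num)]]
    exact Real.sqrt_le_sqrt hx
  have hs0 : (0:ℝ) < Real.sqrt x := by linarith
  have h1 : Real.log x = 2 * Real.log (Real.sqrt x) := by
    rw [Real.log_sqrt (le_of_lt hx0)]; ring
  have h2 : Real.log (Real.sqrt x) ≤ Real.sqrt x - 1 :=
    Real.log_le_sub_one_of_pos hs0
  have h3 : Real.sqrt x * Real.sqrt x = x := Real.mul_self_sqrt (le_of_lt hx0)
  nlinarith

lemma fact_bound {n : ℕ} {L l : ℝ} (k0 : ℕ)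
    (hnpos : (0:ℝ) < n) (hLdef : L = Real.log n) (hldef : l = Real.log L)
    (hk0low : 20 * L / l ≤ (k0:ℝ)) (hk0high : (k0:ℝ) < 20 * L / l + 1)
    (hl100 : 100 ≤ l) (hLbig : 101 ≤ L) (hLl1 : 1 ≤ L / l) :
    (n:ℝ)^2 * 8 ^ k0 ≤ ((k0 + 1).factorial : ℝ) := by
  have hLpos : (0:ℝ) < L := by linarith
  have hlpos : (0:ℝ) < l := by linarith
  have hqnat : ((k0/2 + 1 : ℕ):ℝ) ^ (k0/2) ≤ (k0.factorial : ℝ) := by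
    exact_mod_cast factorial_lower k0
  set q := k0 / 2 with hqdef
  have h2q : (k0:ℝ) ≤ 2*(q:ℝ) + 1 := by exact_mod_cast (by omega : k0 ≤ 2*q+1)
  have hq9 : 9 * L / l ≤ (q:ℝ) := by
    have h1 : 20 * L / l ≤ (k0:ℝ) := hk0low
    have h2 : 9 * L / l = 18 * (L/l) / 2 := by ring
    have h3 : 20 * L / l = 20 * (L/l) := by ring
    nlinarith [hLl1]
  have hqpos : (0:ℝ) ≤ (q:ℝ) := Nat.cast_nonneg q
  have hlogq : l/2 ≤ Real.log ((q:ℝ)+1) := by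
    have h0 : 0 < L / l := by positivity
    have h1 : L / l ≤ (q:ℝ) + 1 := by
      have h9 : 9 * L / l = 9 * (L/l) := by ring
      linarith [hq9, hLl1]
    have h2 : Real.log (L/l) ≤ Real.log ((q:ℝ)+1) := Real.log_le_log h0 h1
    have h3 : Real.log (L/l) = l - Real.log l := by
      rw [Real.log_div (ne_of_gt hLpos) (ne_of_gt hlpos), ← hldef]
    have h4 : Real.log l ≤ l/2 := log_le_half (by linarith)
    linarith
  have hql : 4.5 * L ≤ (q:ℝ) * Real.log ((q:ℝ)+1) := by
    have h1 : (9*L/l) * (l/2) ≤ (q:ℝ) * Real.log ((q:ℝ)+1) := by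
      apply mul_le_mul hq9 hlogq (by linarith) hqpos
    have h2 : (9*L/l) * (l/2) = 4.5 * L := by field_simp; ring
    linarith
  have hlog8 : Real.log 8 ≤ 2.1 := by
    rw [show (8:ℝ) = 2^3 by norm_num, Real.log_pow]
    have := Real.log_two_lt_d9
    push_cast
    linarith
  have hlog8nn : 0 ≤ Real.log 8 := Real.log_nonneg (by norm_num)
  have hLHS : 2*L + (k0:ℝ)*Real.log 8 ≤ 4.5*L := by
    have hk0b : (k0:ℝ) ≤ 20*L/l + 1 := le_of_lt hk0high
    have h1 : (k0:ℝ)*Real.log 8 ≤ (20*L/l+1)*2.1 := by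
      apply mul_le_mul hk0b hlog8 hlog8nn (by positivity)
    have h2 : 20*L/l ≤ 0.2*L := by
      rw [div_le_iff₀ hlpos]
      nlinarith
    nlinarith
  have e1 : Real.exp (2*L) = (n:ℝ)^2 := by
    rw [two_mul, Real.exp_add, hLdef, Real.exp_log hnpos]; ring
  have e2 : Real.exp ((k0:ℝ)*Real.log 8) = 8^k0 := by
    rw [Real.exp_nat_mul, Real.exp_log (by norm_num : (0:ℝ) < 8)]
  have e3 : Real.exp ((q:ℝ)*Real.log ((q:ℝ)+1)) = ((q:ℝ)+1)^q := by
    rw [Real.exp_nat_mul, Real.exp_log (by positivity)]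
  calc (n:ℝ)^2 * 8 ^ k0 = Real.exp (2*L + (k0:ℝ)*Real.log 8) := by
        rw [Real.exp_add, e1, e2]
    _ ≤ Real.exp ((q:ℝ)*Real.log ((q:ℝ)+1)) := Real.exp_le_exp.2 (by linarith)
    _ = ((q:ℝ)+1)^q := e3
    _ = ((q + 1 : ℕ):ℝ)^q := by push_cast; ring
    _ ≤ (k0.factorial : ℝ) := hqnat
    _ ≤ ((k0+1).factorial : ℝ) := by
        exact_mod_cast Nat.factorial_le (by omega)


lemma count_bound_s11 {n : ℕ} (k0 : ℕ) (hk1n : k0 + 1 ≤ n) (hn2 : 2 ≤ n)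
    (hfact : (n:ℝ)^2 * 8 ^ k0 ≤ ((k0 + 1).factorial : ℝ))
    (hEn2 : ((n:ℝ)^2) / 4 ≤ (Fintype.card (Edge n) : ℝ)) :
    (n:ℝ) * (Fintype.card {e : Round n // ∃ t : Fin (k0+1) → Fin n, IsMonoPath e t}) ≤
      (Fintype.card (Round n) : ℝ) := by
  have hnpos : (0:ℝ) < n := by
    have : (0:ℕ) < n := by omega
    exact_mod_cast this
  have hEpos : (0:ℝ) < Fintype.card (Edge n) := by nlinarith
  have hΩ : (Fintype.card (Round n) : ℝ) = (Fintype.card (Edge n) : ℝ) ^ n := by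
    rw [Fintype.card_fun, Fintype.card_fin]; push_cast; ring
  have hchain : (Fintype.card {g : Fin (k0+1) → Edge n // EChain g} : ℝ) ≤
      (Fintype.card (Edge n) : ℝ) * (2*(n:ℝ))^k0 := by
    have := card_echain_le (n := n) k0
    push_cast
    exact_mod_cast this
  have hpath : (Fintype.card {e : Round n // ∃ t : Fin (k0+1) → Fin n, IsMonoPath e t} : ℝ) ≤
      (n.choose (k0+1) : ℝ) * ((Fintype.card {g : Fin (k0+1) → Edge n // EChain g} : ℝ) *
        (Fintype.card (Edge n) : ℝ) ^ (n - (k0+1))) := by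
    exact_mod_cast card_hasPath_le n (k0+1)
  have hchoose : (n.choose (k0+1) : ℝ) ≤ (n:ℝ)^(k0+1) / ((k0+1).factorial : ℝ) :=
    Nat.choose_le_pow_div (k0+1) n
  have hfactpos : (0:ℝ) < ((k0+1).factorial : ℝ) := by
    exact_mod_cast Nat.factorial_pos (k0+1)
  have hS1 : (n:ℝ) * (n.choose (k0+1) : ℝ) * (2*(n:ℝ))^k0 ≤
      (Fintype.card (Edge n) : ℝ)^k0 := by
    calc (n:ℝ) * (n.choose (k0+1) : ℝ) * (2*(n:ℝ))^k0
        ≤ (n:ℝ) * ((n:ℝ)^(k0+1) / ((k0+1).factorial : ℝ)) * (2*(n:ℝ))^k0 := by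
          apply mul_le_mul_of_nonneg_right
            (mul_le_mul_of_nonneg_left hchoose (le_of_lt hnpos)) (by positivity)
      _ = ((n:ℝ)^2 * (2^k0 * 4^k0) / ((k0+1).factorial : ℝ)) * ((n:ℝ)^2/4)^k0 := by
          rw [mul_pow, div_pow]
          field_simp
          ring
      _ ≤ 1 * ((n:ℝ)^2/4)^k0 := by
          apply mul_le_mul_of_nonneg_right _ (by positivity)
          rw [div_le_one hfactpos, ← mul_pow]
          norm_num
          exact hfact
      _ ≤ (Fintype.card (Edge n) : ℝ)^k0 := by
          rw [one_mul]
          exact pow_le_pow_left₀ (by positivity) hEn2 k0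
  have hpow : (Fintype.card (Edge n) : ℝ)^k0 * ((Fintype.card (Edge n) : ℝ) *
      (Fintype.card (Edge n) : ℝ) ^ (n - (k0+1))) = (Fintype.card (Round n) : ℝ) := by
    rw [hΩ, ← pow_succ', ← pow_add]
    congr 1
    omega
  have hchainnn : (0:ℝ) ≤ (Fintype.card {g : Fin (k0+1) → Edge n // EChain g} : ℝ) :=
    Nat.cast_nonneg _
  calc (n:ℝ) * (Fintype.card {e : Round n // ∃ t : Fin (k0+1) → Fin n, IsMonoPath e t})
      ≤ (n:ℝ) * ((n.choose (k0+1) : ℝ) *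
          ((Fintype.card {g : Fin (k0+1) → Edge n // EChain g} : ℝ) *
          (Fintype.card (Edge n) : ℝ) ^ (n - (k0+1)))) :=
        mul_le_mul_of_nonneg_left hpath (le_of_lt hnpos)
    _ ≤ (n:ℝ) * ((n.choose (k0+1) : ℝ) *
          (((Fintype.card (Edge n) : ℝ) * (2*(n:ℝ))^k0) *
          (Fintype.card (Edge n) : ℝ) ^ (n - (k0+1)))) := by
        apply mul_le_mul_of_nonneg_left _ (le_of_lt hnpos)
        apply mul_le_mul_of_nonneg_left _ (Nat.cast_nonneg _)
        apply mul_le_mul_of_nonneg_right hchain (by positivity)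
    _ = ((n:ℝ) * (n.choose (k0+1) : ℝ) * (2*(n:ℝ))^k0) *
          ((Fintype.card (Edge n) : ℝ) * (Fintype.card (Edge n) : ℝ) ^ (n - (k0+1))) := by
        ring
    _ ≤ (Fintype.card (Edge n) : ℝ)^k0 *
          ((Fintype.card (Edge n) : ℝ) * (Fintype.card (Edge n) : ℝ) ^ (n - (k0+1))) :=
        mul_le_mul_of_nonneg_right hS1 (by positivity)
    _ = (Fintype.card (Round n) : ℝ) := hpow


/-- There exist a constant `C > 0` and an integer `N` such that
for every `n ≥ N`, when the `n` edges of a round on `n` agents are chosen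
independently and uniformly at random (i.e. uniformly over all rounds), the
expected value of `M e`, the maximum length of a monotone interference path
(one plus the maximum length of a directed path in the dependency DAG), is at
most `C * log n / log (log n)`. -/
theorem stmt11 :
    ∃ C : ℝ, 0 < C ∧ ∃ N : ℕ, ∀ n : ℕ, N ≤ n →
      (∑ e : Round n, (M e : ℝ)) / (Fintype.card (Round n)) ≤
        C * Real.log n / Real.log (Real.log n) := by
  refine ⟨22, by norm_num, ⌈Real.exp (Real.exp 100)⌉₊ + 1, fun n hn => ?_⟩
  set L := Real.log n with hLdef
  set l := Real.log L with hldef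
  have hnR : Real.exp (Real.exp 100) ≤ (n : ℝ) := by
    calc Real.exp (Real.exp 100) ≤ (⌈Real.exp (Real.exp 100)⌉₊ : ℝ) := Nat.le_ceil _
      _ ≤ n := by exact_mod_cast le_trans (Nat.le_succ _) hn
  have hnpos : (0:ℝ) < n := lt_of_lt_of_le (Real.exp_pos _) hnR
  have hL100 : Real.exp 100 ≤ L := by
    rw [hLdef, ← Real.log_exp (Real.exp 100)]
    exact Real.log_le_log (Real.exp_pos _) hnR
  have hLbig : 101 ≤ L := le_trans (by linarith [Real.add_one_le_exp (100:ℝ)]) hL100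
  have hl100 : 100 ≤ l := by
    rw [hldef, ← Real.log_exp 100]
    exact Real.log_le_log (Real.exp_pos _) hL100
  have hLpos : (0:ℝ) < L := by linarith
  have hlpos : (0:ℝ) < l := by linarith
  have hlL : l ≤ L := le_trans (Real.log_le_sub_one_of_pos hLpos) (by linarith)
  have hLl1 : 1 ≤ L / l := (le_div_iff₀ hlpos).2 (by linarith)
  set k0 := ⌈20 * L / l⌉₊ with hk0def
  have hk0low : 20 * L / l ≤ k0 := Nat.le_ceil _
  have hk0high : (k0 : ℝ) < 20 * L / l + 1 := Nat.ceil_lt_add_one (by positivity)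
  have hLn : L ≤ (n:ℝ) - 1 := Real.log_le_sub_one_of_pos hnpos
  have hLl5 : 20 * L / l ≤ L / 5 := by
    rw [div_le_div_iff₀ hlpos (by norm_num)]
    nlinarith
  have hk1n : k0 + 1 ≤ n := by
    have : ((k0 + 1 : ℕ) : ℝ) < (n:ℝ) := by push_cast; linarith
    exact_mod_cast le_of_lt (Nat.cast_lt.mp this)
  have hn2 : 2 ≤ n := by
    have h : (2:ℝ) ≤ (n:ℝ) := by linarith
    exact_mod_cast h
  -- the factorial bound
  have hfact : (n:ℝ)^2 * 8 ^ k0 ≤ ((k0 + 1).factorial : ℝ) :=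
    fact_bound k0 hnpos hLdef hldef hk0low hk0high hl100 hLbig hLl1
  -- cardinalities
  have hE : Fintype.card (Edge n) = n.choose 2 := by
    rw [Fintype.card_finset_len, Fintype.card_fin]
  have hEn2 : ((n:ℝ)^2) / 4 ≤ (Fintype.card (Edge n) : ℝ) := by
    rw [hE, Nat.choose_two_right]
    have hdvd : 2 ∣ n * (n - 1) := by
      have hn1 : n - 1 + 1 = n := by omega
      have h : Even ((n - 1) * n) := by rw [← hn1]; exact Nat.even_mul_succ_self (n - 1)
      rw [mul_comm]; exact h.two_dvd
    have : ((n * (n-1) / 2 : ℕ) : ℝ) = (n:ℝ) * ((n:ℝ) - 1) / 2 := by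
      rw [Nat.cast_div hdvd (by norm_num)]
      push_cast [Nat.cast_sub (by omega : 1 ≤ n)]
      ring
    rw [this]
    have h2n : (2:ℝ) ≤ n := by exact_mod_cast hn2
    nlinarith
  have hEpos : (0:ℝ) < Fintype.card (Edge n) := by nlinarith
  have hΩ : (Fintype.card (Round n) : ℝ) = (Fintype.card (Edge n) : ℝ) ^ n := by
    rw [Fintype.card_fun, Fintype.card_fin]; push_cast; ring
  have hΩpos : (0:ℝ) < (Fintype.card (Round n) : ℝ) := by
    rw [hΩ]; positivity
  -- counting bound
  have hcount : (n:ℝ) * (Fintype.card {e : Round n // ∃ t : Fin (k0+1) → Fin n, IsMonoPath e t}) ≤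
      (Fintype.card (Round n) : ℝ) := count_bound_s11 k0 hk1n hn2 hfact hEn2
  -- step A pointwise
  have hstepA : ∀ e : Round n, (M e : ℝ) ≤ (k0:ℝ) +
      (n:ℝ) * (if ∃ t : Fin (k0+1) → Fin n, IsMonoPath e t then (1:ℝ) else 0) := by
    intro e
    by_cases h : ∃ t : Fin (k0+1) → Fin n, IsMonoPath e t
    · rw [if_pos h, mul_one]
      have h1 : M e ≤ n := M_le e
      have : (M e : ℝ) ≤ n := by exact_mod_cast h1
      have : (0:ℝ) ≤ k0 := by positivity
      linarith
    · rw [if_neg h, mul_zero, add_zero]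
      have h1 : M e ≤ k0 := by
        by_contra hc
        exact h (exists_path_of_le_M (by omega))
      exact_mod_cast h1
  -- sum up
  have hsum : ∑ e : Round n, (M e : ℝ) ≤
      (Fintype.card (Round n) : ℝ) * k0 +
      (n:ℝ) * (Fintype.card {e : Round n // ∃ t : Fin (k0+1) → Fin n, IsMonoPath e t}) := by
    calc ∑ e : Round n, (M e : ℝ)
        ≤ ∑ e : Round n, ((k0:ℝ) +
            (n:ℝ) * (if ∃ t : Fin (k0+1) → Fin n, IsMonoPath e t then (1:ℝ) else 0)) :=
          Finset.sum_le_sum (fun e _ => hstepA e)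
      _ = (Fintype.card (Round n) : ℝ) * k0 +
            (n:ℝ) * ∑ e : Round n, (if ∃ t : Fin (k0+1) → Fin n, IsMonoPath e t then (1:ℝ) else 0) := by
          rw [Finset.sum_add_distrib, Finset.sum_const, ← Finset.mul_sum, Finset.card_univ,
            nsmul_eq_mul]
      _ = _ := by
          rw [Finset.sum_boole, Fintype.card_subtype]
  -- conclude
  rw [div_le_iff₀ hΩpos]
  have hk22 : (k0 : ℝ) + 1 ≤ 22 * L / l := by
    have h2 : (2:ℝ) ≤ 2 * L / l := by
      rw [le_div_iff₀ hlpos]; linarith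
    have : 20 * L / l + 2 * L / l = 22 * L / l := by ring
    linarith
  calc ∑ e : Round n, (M e : ℝ)
      ≤ (Fintype.card (Round n) : ℝ) * k0 + (Fintype.card (Round n) : ℝ) := by
        linarith [hsum, hcount]
    _ = (Fintype.card (Round n) : ℝ) * ((k0:ℝ) + 1) := by ring
    _ ≤ (Fintype.card (Round n) : ℝ) * (22 * L / l) := by
        apply mul_le_mul_of_nonneg_left hk22 (le_of_lt hΩpos)
    _ = 22 * L / l * (Fintype.card (Round n)) := by ring
end
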